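/- arXiv:1509.04574 — 5 statements merged into one kernel-verified Lean document; each statement's English description precedes it below -/
import Mathlib

section
/- In the group Z_{p^2} × Z_p (p prime), the subgroup generated by (p,0) is contained in each of the p subgroups ⟨(1,j)⟩ for 0 ≤ j ≤ p−1, and apart from these containments, any two distinct proper nontrivial cyclic subgroups of Z_{p^2} × Z_p intersect trivially; consequently I_c(Z_{p^2} × Z_p) ≅ K_{p+1} ∪ (p isolated vertices). -/
set_option linter.unnecessarySimpa false

/-- The vertex type of the intersection graph of cyclic subgroups of an additive group:
proper nontrivial cyclic subgroups. -/
def AddCyclicVertex (A : Type*) [AddGroup A] : Type _ :=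
  {H : AddSubgroup A // H ≠ ⊥ ∧ H ≠ ⊤ ∧ IsAddCyclic H}

/-- The intersection graph of cyclic subgroups of an additive group `A`. -/
def addCyclicIntersectionGraph (A : Type*) [AddGroup A] :
    SimpleGraph (AddCyclicVertex A) where
  Adj H K := H ≠ K ∧ H.1 ⊓ K.1 ≠ ⊥
  symm := by
    constructor
    rintro H K ⟨h1, h2⟩
    exact ⟨h1.symm, by rwa [inf_comm]⟩
  loopless := by
    constructor
    rintro H ⟨h, -⟩
    exact h rfl

open AddSubgroup

section Helpers

variable (p : ℕ) [hp : Fact p.Prime]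

local notation "G" => ZMod (p ^ 2) × ZMod p

noncomputable def piMap : ZMod (p ^ 2) →+* ZMod p :=
  ZMod.castHom (dvd_pow_self p two_ne_zero) (ZMod p)

lemma piMap_natCast (k : ℕ) : piMap p (k : ZMod (p ^ 2)) = (k : ZMod p) := by
  simp [piMap]

lemma piMap_intCast (k : ℤ) : piMap p (k : ZMod (p ^ 2)) = (k : ZMod p) := by
  simp [piMap]

lemma pmul_eq_zero_iff (s : ZMod (p ^ 2)) :
    (p : ZMod (p ^ 2)) * s = 0 ↔ piMap p s = 0 := by
  have hps : piMap p s = (s.val : ZMod p) := by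
    rw [piMap, ZMod.castHom_apply, ← ZMod.natCast_val]
  conv_lhs => rw [← ZMod.natCast_zmod_val s]
  rw [hps, ← Nat.cast_mul, ZMod.natCast_eq_zero_iff,
    ZMod.natCast_eq_zero_iff]
  have h2 := mul_dvd_mul_iff_left (a := p) hp.out.ne_zero (b := p) (c := s.val)
  rwa [← sq] at h2

lemma pmul_pi (s : ZMod (p ^ 2)) :
    (p : ZMod (p ^ 2)) * s = p * (((piMap p s).val : ℕ) : ZMod (p ^ 2)) := by
  have h : (p : ZMod (p ^ 2)) * (s - (((piMap p s).val : ℕ) : ZMod (p ^ 2))) = 0 := by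
    rw [pmul_eq_zero_iff, map_sub, piMap_natCast, ZMod.natCast_zmod_val, sub_self]
  rw [mul_sub, sub_eq_zero] at h
  exact h

lemma psq_zsmul (x : G) : ((p ^ 2 : ℕ) : ℤ) • x = 0 := by
  ext
  · show ((p ^ 2 : ℕ) : ℤ) • x.1 = 0
    rw [natCast_zsmul, nsmul_eq_mul, ZMod.natCast_self, zero_mul]
  · show ((p ^ 2 : ℕ) : ℤ) • x.2 = 0
    rw [natCast_zsmul, nsmul_eq_mul]
    have : ((p ^ 2 : ℕ) : ZMod p) = 0 := by
      push_cast
      simp [ZMod.natCast_self]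
    rw [this, zero_mul]

lemma coprime_zsmul (m : ℤ) (hm : ¬ (p : ℤ) ∣ m) (x : G) :
    AddSubgroup.zmultiples (m • x) = AddSubgroup.zmultiples x := by
  refine le_antisymm (AddSubgroup.zmultiples_le.mpr ⟨m, rfl⟩) ?_
  refine AddSubgroup.zmultiples_le.mpr ?_
  have hcop : IsCoprime ((p : ℤ) ^ 2) m := by
    exact IsCoprime.pow_left ((Prime.coprime_iff_not_dvd (Int.prime_iff_natAbs_prime.mpr (by simpa using hp.out))).mpr hm)
  obtain ⟨u, v, huv⟩ := hcop
  have : x = (u * (p : ℤ) ^ 2 + v * m) • x := by rw [huv, one_zsmul]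
  rw [add_zsmul, mul_zsmul, mul_zsmul] at this
  have hz : ((p : ℤ) ^ 2) • x = 0 := by
    have := psq_zsmul p x
    push_cast at this ⊢
    exact this
  rw [hz, smul_zero, zero_add] at this
  exact AddSubgroup.mem_zmultiples_iff.mpr ⟨v, this.symm⟩

lemma zmultiples_of_isAddCyclic (A : AddSubgroup G) (h : IsAddCyclic A) :
    ∃ x : G, A = AddSubgroup.zmultiples x := by
  obtain ⟨g, hg⟩ := h.exists_zsmul_surjective
  refine ⟨(g : G), le_antisymm ?_ (AddSubgroup.zmultiples_le.mpr g.2)⟩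
  intro y hy
  obtain ⟨n, hn⟩ := hg ⟨y, hy⟩
  exact ⟨n, congrArg Subtype.val hn⟩

lemma isAddCyclic_zmultiples (x : G) : IsAddCyclic (AddSubgroup.zmultiples x) := by
  refine ⟨⟨x, AddSubgroup.mem_zmultiples x⟩, fun y => ?_⟩
  obtain ⟨n, hn⟩ := y.2
  exact ⟨n, Subtype.ext (by simpa using hn)⟩

noncomputable def genP : G := ((p : ZMod (p ^ 2)), (0 : ZMod p))

def genJ (j : ZMod p) : G := ((1 : ZMod (p ^ 2)), j)

noncomputable def genC (c : ZMod p) : G :=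
  ((p : ZMod (p ^ 2)) * ((c.val : ℕ) : ZMod (p ^ 2)), (1 : ZMod p))

lemma p_zsmul_genJ (j : ZMod p) : (p : ℤ) • genJ p j = genP p := by
  ext
  · show (p : ℤ) • (1 : ZMod (p ^ 2)) = (p : ZMod (p ^ 2))
    rw [zsmul_eq_mul, mul_one]; push_cast; ring
  · show (p : ℤ) • j = (0 : ZMod p)
    rw [zsmul_eq_mul]
    push_cast
    rw [ZMod.natCast_self, zero_mul]

lemma p_zsmul_genP : (p : ℤ) • genP p = 0 := by
  ext
  · show (p : ℤ) • (p : ZMod (p ^ 2)) = 0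
    rw [zsmul_eq_mul]
    push_cast
    rw [← Nat.cast_mul, ← pow_two, ZMod.natCast_self]
  · show (p : ℤ) • (0 : ZMod p) = 0
    simp

lemma p_zsmul_genC (c : ZMod p) : (p : ℤ) • genC p c = 0 := by
  ext
  · show (p : ℤ) • ((p : ZMod (p ^ 2)) * _) = 0
    rw [zsmul_eq_mul, ← mul_assoc]
    push_cast
    rw [← Nat.cast_mul, ← pow_two, ZMod.natCast_self, zero_mul]
  · show (p : ℤ) • (1 : ZMod p) = 0
    rw [zsmul_eq_mul, mul_one]
    push_cast
    rw [ZMod.natCast_self]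

lemma pcast_ne_zero : (p : ZMod (p ^ 2)) ≠ 0 := by
  rw [Ne, ZMod.natCast_eq_zero_iff]
  intro h
  have := Nat.le_of_dvd hp.out.pos h
  have h2 := hp.out.two_le
  nlinarith [sq_nonneg p]

lemma one_ne_zero_zmodp : (1 : ZMod p) ≠ 0 := by
  haveI : Nontrivial (ZMod p) := ZMod.nontrivial_iff.mpr hp.out.one_lt.ne'
  exact one_ne_zero

lemma genP_ne_zero : genP p ≠ 0 := by
  intro h
  exact pcast_ne_zero p (congrArg Prod.fst h)

lemma genJ_ne_zero (j : ZMod p) : genJ p j ≠ 0 := by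
  intro h
  have h0 : (1 : ZMod (p ^ 2)) = 0 := congrArg Prod.fst h
  haveI : Nontrivial (ZMod (p ^ 2)) := by
    refine ZMod.nontrivial_iff.mpr ?_
    have := hp.out.two_le
    intro h1
    nlinarith [sq_nonneg p]
  exact one_ne_zero h0

lemma genC_ne_zero (c : ZMod p) : genC p c ≠ 0 := by
  intro h
  exact one_ne_zero_zmodp p (congrArg Prod.snd h)

lemma zmultiples_eq_of_mem_torsion (x z : G) (hx : (p : ℤ) • x = 0)
    (hz : z ∈ AddSubgroup.zmultiples x) (hz0 : z ≠ 0) :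
    AddSubgroup.zmultiples x = AddSubgroup.zmultiples z := by
  obtain ⟨m, hm⟩ := AddSubgroup.mem_zmultiples_iff.mp hz
  have hpm : ¬ (p : ℤ) ∣ m := by
    rintro ⟨k, rfl⟩
    apply hz0
    rw [← hm, mul_comm, mul_zsmul, hx, smul_zero]
  rw [← coprime_zsmul p m hpm x, hm]

lemma ptorsion_of_mem (x z : G) (hx : (p : ℤ) • x = 0)
    (hz : z ∈ AddSubgroup.zmultiples x) : (p : ℤ) • z = 0 := by
  obtain ⟨m, hm⟩ := AddSubgroup.mem_zmultiples_iff.mp hz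
  rw [← hm, smul_comm, hx, smul_zero]

lemma mem_genP_of_ptorsion (j : ZMod p) (z : G)
    (hz : z ∈ AddSubgroup.zmultiples (genJ p j)) (hpz : (p : ℤ) • z = 0) :
    z ∈ AddSubgroup.zmultiples (genP p) := by
  obtain ⟨n, hn⟩ := AddSubgroup.mem_zmultiples_iff.mp hz
  have h0 : n • genP p = 0 := by
    rw [← p_zsmul_genJ p j, smul_comm, hn]
    exact hpz
  have h1 : ((n : ZMod (p ^ 2))) * (p : ZMod (p ^ 2)) = 0 := by
    have := congrArg Prod.fst h0
    simpa [genP, zsmul_eq_mul] using this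
  have h2 : (n : ZMod p) = 0 := by
    rw [mul_comm] at h1
    have := (pmul_eq_zero_iff p _).mp h1
    rwa [piMap_intCast] at this
  obtain ⟨k, rfl⟩ := (ZMod.intCast_zmod_eq_zero_iff_dvd n p).mp h2
  refine AddSubgroup.mem_zmultiples_iff.mpr ⟨k, ?_⟩
  rw [← hn, mul_comm, mul_zsmul, p_zsmul_genJ]

lemma zsmul_fst (n : ℕ) (x : G) : ((n : ℤ) • x).1 = (n : ZMod (p ^ 2)) * x.1 := by
  show (n : ℤ) • x.1 = _
  rw [zsmul_eq_mul]
  push_cast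
  ring

lemma zsmul_snd (n : ℕ) (x : G) : ((n : ℤ) • x).2 = (n : ZMod p) * x.2 := by
  show (n : ℤ) • x.2 = _
  rw [zsmul_eq_mul]
  push_cast
  ring

lemma not_pdvd_of_unit_mod_p (m : ℕ) (hm : (m : ZMod p) ≠ 0) : ¬ (p : ℤ) ∣ (m : ℤ) := by
  intro h
  rw [Int.natCast_dvd_natCast] at h
  exact hm ((ZMod.natCast_eq_zero_iff m p).mpr h)

lemma classify (A : AddSubgroup G) (hbot : A ≠ ⊥) (hcyc : IsAddCyclic A) :
    (∃ j : ZMod p, A = AddSubgroup.zmultiples (genJ p j)) ∨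
    (∃ c : ZMod p, A = AddSubgroup.zmultiples (genC p c)) ∨
    A = AddSubgroup.zmultiples (genP p) := by
  obtain ⟨x, rfl⟩ := zmultiples_of_isAddCyclic p A hcyc
  have hx0 : x ≠ 0 := by
    intro h
    apply hbot
    rw [h]
    exact AddSubgroup.zmultiples_zero_eq_bot
  obtain ⟨a, b⟩ := x
  by_cases hpa : piMap p a = 0
  · -- a is divisible by p
    have hpdvd : p ∣ a.val := by
      have : piMap p a = ((a.val : ℕ) : ZMod p) := by
        rw [piMap, ZMod.castHom_apply, ← ZMod.natCast_val]
      rw [this] at hpa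
      exact (ZMod.natCast_eq_zero_iff _ p).mp hpa
    set t : ZMod (p ^ 2) := ((a.val / p : ℕ) : ZMod (p ^ 2)) with ht
    have ha : a = (p : ZMod (p ^ 2)) * t := by
      rw [ht, ← Nat.cast_mul, Nat.mul_div_cancel' hpdvd, ZMod.natCast_zmod_val]
    by_cases hb : b = 0
    · -- x = (p t, 0) : this is a scaled genP
      refine Or.inr (Or.inr ?_)
      have hπt : piMap p t ≠ 0 := by
        intro h
        apply hx0
        have : a = 0 := by rw [ha, (pmul_eq_zero_iff p t).mpr h]
        rw [this, hb]
        rfl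
      set m : ℕ := ((piMap p t)⁻¹).val with hmdef
      have hm : (m : ZMod p) = (piMap p t)⁻¹ := ZMod.natCast_zmod_val _
      have hm1 : (m : ZMod p) * piMap p t = 1 := by
        rw [hm, inv_mul_cancel₀ hπt]
      have hmne : (m : ZMod p) ≠ 0 := by
        intro h
        rw [h, zero_mul] at hm1
        exact one_ne_zero_zmodp p hm1.symm
      have hpm := not_pdvd_of_unit_mod_p p m hmne
      rw [← coprime_zsmul p (m : ℤ) hpm (a, b)]
      congr 1
      ext
      · rw [zsmul_fst, ha, ← mul_assoc, mul_comm ((m : ZMod (p^2))) _, mul_assoc,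
          pmul_pi p ((m : ZMod (p^2)) * t)]
        have : piMap p ((m : ZMod (p ^ 2)) * t) = 1 := by
          rw [map_mul, piMap_natCast, hm1]
        rw [this]
        show (p : ZMod (p ^ 2)) * (((1 : ZMod p).val : ℕ) : ZMod (p ^ 2)) = (p : ZMod (p ^ 2))
        rw [ZMod.val_one, Nat.cast_one, mul_one]
      · rw [zsmul_snd, hb, mul_zero]
        rfl
    · -- x = (p t, b), b ≠ 0 : scaled genC
      have hπt2 : True := trivial
      set m : ℕ := (b⁻¹).val with hmdef
      have hm : (m : ZMod p) = b⁻¹ := ZMod.natCast_zmod_val _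
      have hm1 : (m : ZMod p) * b = 1 := by rw [hm, inv_mul_cancel₀ hb]
      have hmne : (m : ZMod p) ≠ 0 := by
        intro h
        rw [h, zero_mul] at hm1
        exact one_ne_zero_zmodp p hm1.symm
      have hpm := not_pdvd_of_unit_mod_p p m hmne
      refine Or.inr (Or.inl ⟨piMap p ((m : ZMod (p ^ 2)) * t), ?_⟩)
      rw [← coprime_zsmul p (m : ℤ) hpm (a, b)]
      congr 1
      ext
      · rw [zsmul_fst, ha, ← mul_assoc, mul_comm ((m : ZMod (p^2))) _, mul_assoc,
          pmul_pi p ((m : ZMod (p^2)) * t)]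
        rfl
      · rw [zsmul_snd, hm1]
        rfl
  · -- a is a unit
    have hpd : ¬ p ∣ a.val := by
      intro h
      apply hpa
      have : piMap p a = ((a.val : ℕ) : ZMod p) := by
        rw [piMap, ZMod.castHom_apply, ← ZMod.natCast_val]
      rw [this]
      exact (ZMod.natCast_eq_zero_iff _ p).mpr h
    have hcop : Nat.Coprime a.val (p ^ 2) :=
      Nat.Coprime.pow_right 2 (hp.out.coprime_iff_not_dvd.mpr hpd).symm
    set u := ZMod.unitOfCoprime a.val hcop with hu
    have hua : (u : ZMod (p ^ 2)) = a := by
      rw [hu, ZMod.coe_unitOfCoprime, ZMod.natCast_zmod_val]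
    set m : ℕ := ((↑u⁻¹ : ZMod (p ^ 2))).val with hmdef
    have hm : (m : ZMod (p ^ 2)) = (↑u⁻¹ : ZMod (p ^ 2)) := ZMod.natCast_zmod_val _
    have hm1 : (m : ZMod (p ^ 2)) * a = 1 := by
      rw [hm, ← hua]
      exact u.inv_mul
    have hmne : (m : ZMod p) ≠ 0 := by
      intro h
      have : piMap p ((m : ZMod (p ^ 2)) * a) = 1 := by rw [hm1, map_one]
      rw [map_mul, piMap_natCast, h, zero_mul] at this
      exact one_ne_zero_zmodp p this.symm
    have hpm := not_pdvd_of_unit_mod_p p m hmne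
    refine Or.inl ⟨(m : ZMod p) * b, ?_⟩
    rw [← coprime_zsmul p (m : ℤ) hpm (a, b)]
    congr 1
    ext
    · rw [zsmul_fst, hm1]
      rfl
    · rw [zsmul_snd]
      rfl

lemma zsmulInt_fst (n : ℤ) (x : G) : (n • x).1 = ((n : ℤ) : ZMod (p ^ 2)) * x.1 := by
  show n • x.1 = _
  rw [zsmul_eq_mul]

lemma zsmulInt_snd (n : ℤ) (x : G) : (n • x).2 = ((n : ℤ) : ZMod p) * x.2 := by
  show n • x.2 = _
  rw [zsmul_eq_mul]

lemma pmul_inj (s t : ZMod (p ^ 2)) :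
    (p : ZMod (p ^ 2)) * s = (p : ZMod (p ^ 2)) * t ↔ piMap p s = piMap p t := by
  rw [← sub_eq_zero, ← mul_sub, pmul_eq_zero_iff, map_sub, sub_eq_zero]

lemma piMap_p : piMap p (p : ZMod (p ^ 2)) = 0 := by
  rw [piMap_natCast, ZMod.natCast_self]

lemma pi_fst_zero (x : G) (hx : piMap p x.1 = 0) (z : G)
    (hz : z ∈ AddSubgroup.zmultiples x) : piMap p z.1 = 0 := by
  obtain ⟨n, hn⟩ := AddSubgroup.mem_zmultiples_iff.mp hz
  rw [← hn, zsmulInt_fst, map_mul, hx, mul_zero]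

lemma pi_fst_genP (z : G) (hz : z ∈ AddSubgroup.zmultiples (genP p)) : piMap p z.1 = 0 :=
  pi_fst_zero p _ (piMap_p p) z hz

lemma pi_fst_genC (c : ZMod p) (z : G) (hz : z ∈ AddSubgroup.zmultiples (genC p c)) :
    piMap p z.1 = 0 := by
  refine pi_fst_zero p _ ?_ z hz
  show piMap p ((p : ZMod (p ^ 2)) * _) = 0
  rw [map_mul, piMap_p, zero_mul]

lemma zmultiples_ne_bot (x : G) (hx : x ≠ 0) : AddSubgroup.zmultiples x ≠ ⊥ := by
  intro h
  exact hx (AddSubgroup.mem_bot.mp (h ▸ AddSubgroup.mem_zmultiples x))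

lemma genP_ne_top : AddSubgroup.zmultiples (genP p) ≠ ⊤ := by
  intro h
  have : piMap p ((1 : ZMod (p ^ 2)), (0 : ZMod p)).1 = 0 :=
    pi_fst_genP p _ (h ▸ AddSubgroup.mem_top _)
  rw [map_one] at this
  exact one_ne_zero_zmodp p this

lemma genC_ne_top (c : ZMod p) : AddSubgroup.zmultiples (genC p c) ≠ ⊤ := by
  intro h
  have : piMap p ((1 : ZMod (p ^ 2)), (0 : ZMod p)).1 = 0 :=
    pi_fst_genC p c _ (h ▸ AddSubgroup.mem_top _)
  rw [map_one] at this
  exact one_ne_zero_zmodp p this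

lemma genJ_ne_top (j : ZMod p) : AddSubgroup.zmultiples (genJ p j) ≠ ⊤ := by
  intro h
  have hmem : ((0 : ZMod (p ^ 2)), (1 : ZMod p)) ∈ AddSubgroup.zmultiples (genJ p j) :=
    h ▸ AddSubgroup.mem_top _
  obtain ⟨n, hn⟩ := AddSubgroup.mem_zmultiples_iff.mp hmem
  have h1 : ((n : ℤ) : ZMod (p ^ 2)) = 0 := by
    have := congrArg Prod.fst hn
    rw [zsmulInt_fst] at this
    simpa [genJ] using this
  have h2 : ((n : ℤ) : ZMod p) = 0 := by
    rw [ZMod.intCast_zmod_eq_zero_iff_dvd] at h1 ⊢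
    exact dvd_trans (by exact_mod_cast dvd_pow_self (p : ℤ) two_ne_zero) h1
  have h3 := congrArg Prod.snd hn
  rw [zsmulInt_snd, h2, zero_mul] at h3
  exact one_ne_zero_zmodp p h3.symm

lemma genJ_inj (i j : ZMod p)
    (h : AddSubgroup.zmultiples (genJ p i) = AddSubgroup.zmultiples (genJ p j)) : i = j := by
  have hmem : genJ p i ∈ AddSubgroup.zmultiples (genJ p j) := h ▸ AddSubgroup.mem_zmultiples _
  obtain ⟨n, hn⟩ := AddSubgroup.mem_zmultiples_iff.mp hmem
  have h1 : ((n : ℤ) : ZMod (p ^ 2)) = 1 := by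
    have := congrArg Prod.fst hn
    rw [zsmulInt_fst] at this
    simpa [genJ] using this
  have h2 : ((n : ℤ) : ZMod p) = 1 := by
    have := congrArg (piMap p) h1
    rwa [piMap_intCast, map_one] at this
  have h3 := congrArg Prod.snd hn
  rw [zsmulInt_snd, h2, one_mul] at h3
  exact h3.symm

lemma genC_inj (c c' : ZMod p)
    (h : AddSubgroup.zmultiples (genC p c) = AddSubgroup.zmultiples (genC p c')) : c = c' := by
  have hmem : genC p c' ∈ AddSubgroup.zmultiples (genC p c) :=
    h ▸ AddSubgroup.mem_zmultiples _
  obtain ⟨n, hn⟩ := AddSubgroup.mem_zmultiples_iff.mp hmem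
  have h2 : ((n : ℤ) : ZMod p) = 1 := by
    have := congrArg Prod.snd hn
    rw [zsmulInt_snd] at this
    simpa [genC] using this
  have h1 := congrArg Prod.fst hn
  rw [zsmulInt_fst] at h1
  have h1' : (p : ZMod (p ^ 2)) * (((n : ℤ) : ZMod (p ^ 2)) * ((c.val : ℕ) : ZMod (p ^ 2)))
      = (p : ZMod (p ^ 2)) * ((c'.val : ℕ) : ZMod (p ^ 2)) := by
    have h1'' : ((n : ℤ) : ZMod (p ^ 2)) * ((p : ZMod (p ^ 2)) * ((c.val : ℕ) : ZMod (p ^ 2)))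
        = (p : ZMod (p ^ 2)) * ((c'.val : ℕ) : ZMod (p ^ 2)) := h1
    rw [← h1'']
    ring
  rw [pmul_inj, map_mul, piMap_intCast, h2, one_mul] at h1'
  have hc : piMap p ((c.val : ℕ) : ZMod (p ^ 2)) = c := by
    rw [piMap_natCast, ZMod.natCast_zmod_val]
  have hc' : piMap p ((c'.val : ℕ) : ZMod (p ^ 2)) = c' := by
    rw [piMap_natCast, ZMod.natCast_zmod_val]
  rw [hc, hc'] at h1'
  exact h1'

lemma genC_ne_genP (c : ZMod p) :
    AddSubgroup.zmultiples (genC p c) ≠ AddSubgroup.zmultiples (genP p) := by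
  intro h
  have hmem : genC p c ∈ AddSubgroup.zmultiples (genP p) := h ▸ AddSubgroup.mem_zmultiples _
  obtain ⟨n, hn⟩ := AddSubgroup.mem_zmultiples_iff.mp hmem
  have h2 := congrArg Prod.snd hn
  rw [zsmulInt_snd] at h2
  have : (0 : ZMod p) = 1 := by simpa [genP, genC] using h2
  exact one_ne_zero_zmodp p this.symm

lemma genJ_ne_genP (j : ZMod p) :
    AddSubgroup.zmultiples (genJ p j) ≠ AddSubgroup.zmultiples (genP p) := by
  intro h
  have hmem : genJ p j ∈ AddSubgroup.zmultiples (genP p) := h ▸ AddSubgroup.mem_zmultiples _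
  have := ptorsion_of_mem p (genP p) _ (p_zsmul_genP p) hmem
  rw [p_zsmul_genJ] at this
  exact genP_ne_zero p this

lemma genJ_ne_genC (j c : ZMod p) :
    AddSubgroup.zmultiples (genJ p j) ≠ AddSubgroup.zmultiples (genC p c) := by
  intro h
  have hmem : genJ p j ∈ AddSubgroup.zmultiples (genC p c) := h ▸ AddSubgroup.mem_zmultiples _
  have := ptorsion_of_mem p (genC p c) _ (p_zsmul_genC p c) hmem
  rw [p_zsmul_genJ] at this
  exact genP_ne_zero p this

lemma genP_le_genJ (j : ZMod p) :
    AddSubgroup.zmultiples (genP p) ≤ AddSubgroup.zmultiples (genJ p j) :=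
  AddSubgroup.zmultiples_le.mpr (AddSubgroup.mem_zmultiples_iff.mpr ⟨(p : ℤ), p_zsmul_genJ p j⟩)

end Helpers


section Main

variable (p : ℕ) [hp : Fact p.Prime]

local notation "G" => ZMod (p ^ 2) × ZMod p

noncomputable def vertexMap : (ZMod p ⊕ ZMod p ⊕ Unit) → AddCyclicVertex G
  | Sum.inl j => ⟨AddSubgroup.zmultiples (genJ p j),
      zmultiples_ne_bot p _ (genJ_ne_zero p j), genJ_ne_top p j, isAddCyclic_zmultiples p _⟩
  | Sum.inr (Sum.inl c) => ⟨AddSubgroup.zmultiples (genC p c),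
      zmultiples_ne_bot p _ (genC_ne_zero p c), genC_ne_top p c, isAddCyclic_zmultiples p _⟩
  | Sum.inr (Sum.inr _) => ⟨AddSubgroup.zmultiples (genP p),
      zmultiples_ne_bot p _ (genP_ne_zero p), genP_ne_top p, isAddCyclic_zmultiples p _⟩

lemma vertexMap_bijective : Function.Bijective (vertexMap p) := by
  constructor
  · rintro (i | c | u) (j | d | v) h
    · exact congrArg Sum.inl (genJ_inj p i j (congrArg Subtype.val h))
    · exact absurd (congrArg Subtype.val h) (genJ_ne_genC p i d)
    · exact absurd (congrArg Subtype.val h) (genJ_ne_genP p i)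
    · exact absurd (congrArg Subtype.val h).symm (genJ_ne_genC p j c)
    · exact congrArg (Sum.inr ∘ Sum.inl) (genC_inj p c d (congrArg Subtype.val h))
    · exact absurd (congrArg Subtype.val h) (genC_ne_genP p c)
    · exact absurd (congrArg Subtype.val h).symm (genJ_ne_genP p j)
    · exact absurd (congrArg Subtype.val h).symm (genC_ne_genP p d)
    · cases u; cases v; rfl
  · rintro ⟨H, h1, h2, h3⟩
    rcases classify p H h1 h3 with ⟨j, rfl⟩ | ⟨c, rfl⟩ | rfl
    · exact ⟨Sum.inl j, rfl⟩
    · exact ⟨Sum.inr (Sum.inl c), rfl⟩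
    · exact ⟨Sum.inr (Sum.inr Unit.unit), rfl⟩

end Main

theorem stmt5 (p : ℕ) (hp : p.Prime) :
    ∀ P : AddSubgroup (ZMod (p ^ 2) × ZMod p),
      P = AddSubgroup.zmultiples ((p : ZMod (p ^ 2)), (0 : ZMod p)) →
      ∀ S : Set (AddSubgroup (ZMod (p ^ 2) × ZMod p)),
        S = insert P {H | ∃ j : ZMod p, H = AddSubgroup.zmultiples ((1 : ZMod (p ^ 2)), j)} →
        (∀ j : ZMod p, P ≤ AddSubgroup.zmultiples ((1 : ZMod (p ^ 2)), j)) ∧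
        (∀ A B : AddSubgroup (ZMod (p ^ 2) × ZMod p),
          A ≠ ⊥ → A ≠ ⊤ → IsAddCyclic A → B ≠ ⊥ → B ≠ ⊤ → IsAddCyclic B → A ≠ B →
            (A ⊓ B ≠ ⊥ ↔ A ∈ S ∧ B ∈ S)) ∧
        S.ncard = p + 1 ∧
        Nat.card (AddCyclicVertex (ZMod (p ^ 2) × ZMod p)) = 2 * p + 1 := by
  haveI : Fact p.Prime := ⟨hp⟩
  haveI : NeZero p := ⟨hp.pos.ne'⟩
  intro P hP S hS
  subst hP hS
  have hgenP : ((p : ZMod (p ^ 2)), (0 : ZMod p)) = genP p := rfl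
  have hgenJ : ∀ j : ZMod p, ((1 : ZMod (p ^ 2)), j) = genJ p j := fun _ => rfl
  have hPmem : ∀ H, H ∈ (insert (AddSubgroup.zmultiples ((p : ZMod (p ^ 2)), (0 : ZMod p)))
      {H | ∃ j : ZMod p, H = AddSubgroup.zmultiples ((1 : ZMod (p ^ 2)), j)}) →
      AddSubgroup.zmultiples (genP p) ≤ H := by
    intro H hH
    rcases hH with rfl | ⟨j, rfl⟩
    · exact le_refl _
    · exact genP_le_genJ p j
  refine ⟨fun j => genP_le_genJ p j, ?_, ?_, ?_⟩
  · intro A B hAb hAt hAc hBb hBt hBc hAB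
    constructor
    · intro hne
      obtain ⟨z, hzmem, hz0⟩ : ∃ z, z ∈ A ⊓ B ∧ z ≠ 0 := by
        by_contra h
        push_neg at h
        exact hne ((AddSubgroup.eq_bot_iff_forall _).mpr fun x hx => h x hx)
      have hzA : z ∈ A := hzmem.1
      have hzB : z ∈ B := hzmem.2
      have keyJ : ∀ (i : ZMod p) (x : ZMod (p ^ 2) × ZMod p), (p : ℤ) • x = 0 →
          z ∈ AddSubgroup.zmultiples (genJ p i) → z ∈ AddSubgroup.zmultiples x →
          AddSubgroup.zmultiples x = AddSubgroup.zmultiples (genP p) := by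
        intro i x hxt hzJ hzx
        have hpz : (p : ℤ) • z = 0 := ptorsion_of_mem p x z hxt hzx
        have hzP : z ∈ AddSubgroup.zmultiples (genP p) := mem_genP_of_ptorsion p i z hzJ hpz
        rw [zmultiples_eq_of_mem_torsion p x z hxt hzx hz0,
          ← zmultiples_eq_of_mem_torsion p (genP p) z (p_zsmul_genP p) hzP hz0]
      have keyT : ∀ x y : ZMod (p ^ 2) × ZMod p, (p : ℤ) • x = 0 → (p : ℤ) • y = 0 →
          z ∈ AddSubgroup.zmultiples x → z ∈ AddSubgroup.zmultiples y →
          AddSubgroup.zmultiples x = AddSubgroup.zmultiples y := by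
        intro x y hx hy hzx hzy
        rw [zmultiples_eq_of_mem_torsion p x z hx hzx hz0,
          ← zmultiples_eq_of_mem_torsion p y z hy hzy hz0]
      have memJ : ∀ i : ZMod p, AddSubgroup.zmultiples (genJ p i) ∈
          (insert (AddSubgroup.zmultiples ((p : ZMod (p ^ 2)), (0 : ZMod p)))
          {H | ∃ j : ZMod p, H = AddSubgroup.zmultiples ((1 : ZMod (p ^ 2)), j)}) :=
        fun i => Set.mem_insert_iff.mpr (Or.inr ⟨i, rfl⟩)
      have memP : AddSubgroup.zmultiples (genP p) ∈
          (insert (AddSubgroup.zmultiples ((p : ZMod (p ^ 2)), (0 : ZMod p)))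
          {H | ∃ j : ZMod p, H = AddSubgroup.zmultiples ((1 : ZMod (p ^ 2)), j)}) :=
        Set.mem_insert_iff.mpr (Or.inl rfl)
      rcases classify p A hAb hAc with ⟨i, rfl⟩ | ⟨c, rfl⟩ | rfl <;>
        rcases classify p B hBb hBc with ⟨j, rfl⟩ | ⟨d, rfl⟩ | rfl
      · exact ⟨memJ i, memJ j⟩
      · exact ⟨memJ i, (keyJ i _ (p_zsmul_genC p d) hzA hzB) ▸ memP⟩
      · exact ⟨memJ i, memP⟩
      · exact ⟨(keyJ j _ (p_zsmul_genC p c) hzB hzA) ▸ memP, memJ j⟩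
      · exact absurd (keyT _ _ (p_zsmul_genC p c) (p_zsmul_genC p d) hzA hzB) hAB
      · exact absurd (keyT _ _ (p_zsmul_genC p c) (p_zsmul_genP p) hzA hzB) hAB
      · exact ⟨memP, memJ j⟩
      · exact absurd (keyT _ _ (p_zsmul_genP p) (p_zsmul_genC p d) hzA hzB) hAB
      · exact absurd rfl hAB
    · rintro ⟨hA, hB⟩
      intro h
      have hmem : genP p ∈ A ⊓ B :=
        AddSubgroup.mem_inf.mpr ⟨hPmem A hA (AddSubgroup.mem_zmultiples _),
          hPmem B hB (AddSubgroup.mem_zmultiples _)⟩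
      rw [h] at hmem
      exact genP_ne_zero p (AddSubgroup.mem_bot.mp hmem)
  · have hins : {H | ∃ j : ZMod p, H = AddSubgroup.zmultiples ((1 : ZMod (p ^ 2)), j)}
        = Set.range (fun j : ZMod p => AddSubgroup.zmultiples (genJ p j)) := by
      ext H
      exact ⟨fun ⟨j, hj⟩ => ⟨j, hj.symm⟩, fun ⟨j, hj⟩ => ⟨j, hj.symm⟩⟩
    rw [hins, Set.ncard_insert_of_notMem ?notmem (Set.finite_range _)]
    case notmem =>
      rintro ⟨j, hj⟩
      exact genJ_ne_genP p j hj
    rw [← Set.image_univ, Set.ncard_image_of_injective _ (fun i j h => genJ_inj p i j h),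
      Set.ncard_univ, Nat.card_zmod]
  · rw [← Nat.card_eq_of_bijective (vertexMap p) (vertexMap_bijective p),
      Nat.card_sum, Nat.card_sum, Nat.card_zmod]
    simp
    ring
end

section
/- Let G be a finite group. The intersection graph of cyclic subgroups I_c(G) is a star graph K_{1,n} (n ≥ 1) if and only if G ≅ Z_{p^3} for some prime p (in which case the graph is K_2 = K_{1,1}). -/
/-- The vertex type of the intersection graph of cyclic subgroups:
proper nontrivial cyclic subgroups of `G`. -/
def CyclicVertex (G : Type*) [Group G] : Type _ :=
  {H : Subgroup G // H ≠ ⊥ ∧ H ≠ ⊤ ∧ IsCyclic H}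

/-- The intersection graph of cyclic subgroups of a group `G`: vertices are the
proper nontrivial cyclic subgroups, two distinct vertices adjacent iff their
intersection is nontrivial. -/
def cyclicIntersectionGraph (G : Type*) [Group G] : SimpleGraph (CyclicVertex G) where
  Adj A B := A ≠ B ∧ A.1 ⊓ B.1 ≠ ⊥
  symm := by
    constructor
    rintro A B ⟨h1, h2⟩
    exact ⟨h1.symm, by rwa [inf_comm]⟩
  loopless := by
    constructor
    rintro A ⟨h, -⟩
    exact h rfl

private lemma nt_aux (N m : ℕ) (hm1 : 1 < m) (hmN : m < N) (hmd : m ∣ N)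
    (h1 : ∀ d, d ∣ N → 1 < d → d < N → d ∣ m ∨ m ∣ d)
    (h5 : ∀ d e, d ∣ N → 1 < d → d < N → e ∣ N → 1 < e → e < N →
      d ≠ m → e ≠ m → d ∣ e → d = e)
    (h4 : ∃ d, d ∣ N ∧ 1 < d ∧ d < N ∧ d ≠ m) :
    ∃ p, p.Prime ∧ N = p ^ 3 := by
  have hN0 : N ≠ 0 := by omega
  have hplt : ∀ q : ℕ, q.Prime → q ∣ N → q < N := by
    intro q hq hqN
    rcases lt_or_eq_of_le (Nat.le_of_dvd (by omega) hqN) with h | h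
    · exact h
    · subst h
      rcases Nat.Prime.eq_one_or_self_of_dvd hq m hmd with h | h <;> omega
  have hkey : ∀ q : ℕ, q.Prime → q ∣ N → q ∣ m ∨ m = q := by
    intro q hq hqN
    rcases h1 q hqN hq.one_lt (hplt q hq hqN) with h | h
    · exact Or.inl h
    · rcases Nat.Prime.eq_one_or_self_of_dvd hq m h with h' | h' <;> omega
  have huniq : ∀ q r : ℕ, q.Prime → r ∣ N → r.Prime → q ∣ N → q = r := by
    intro q r hq hrN hr hqN
    by_contra hne
    have hco : Nat.Coprime q r := (Nat.coprime_primes hq hr).mpr hne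
    have hq1 : 1 < q := hq.one_lt
    have hr1 : 1 < r := hr.one_lt
    have hqm : q ∣ m := by
      rcases hkey q hq hqN with h | h
      · exact h
      · rcases hkey r hr hrN with h' | h'
        · exact absurd ((Nat.prime_dvd_prime_iff_eq hr hq).mp (h ▸ h')) (Ne.symm hne)
        · omega
    have hrm : r ∣ m := by
      rcases hkey r hr hrN with h | h
      · exact h
      · exact absurd ((Nat.prime_dvd_prime_iff_eq hq hr).mp (h ▸ hqm)) hne
    have hqm' : q ≠ m := by
      rintro rfl
      exact hne ((Nat.prime_dvd_prime_iff_eq hr hq).mp hrm).symm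
    have hrm' : r ≠ m := by
      rintro rfl
      exact hne ((Nat.prime_dvd_prime_iff_eq hq hr).mp hqm)
    have hqrm : q * r ∣ m := hco.mul_dvd_of_dvd_of_dvd hqm hrm
    by_cases hqr : q * r = m
    · obtain ⟨k, hk⟩ := hmd
      have hk1 : k ≠ 1 := by rintro rfl; omega
      have hk0 : k ≠ 0 := by rintro rfl; omega
      set s := k.minFac with hs
      have hsp : s.Prime := Nat.minFac_prime hk1
      have hs1 : 1 < s := hsp.one_lt
      have hsk : s ∣ k := Nat.minFac_dvd k
      have hsN : s ∣ N := hk ▸ Dvd.dvd.mul_left hsk m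
      by_cases hsq : s = q
      · have h2 : q * q ∣ N := by
          rw [hk]
          exact mul_dvd_mul hqm (hsq ▸ hsk)
        have h2N : q * q ≠ N := by
          intro h
          have : r ∣ q * q := h ▸ hrN
          rcases (Nat.Prime.dvd_mul hr).mp this with h' | h' <;>
            exact hne (((Nat.prime_dvd_prime_iff_eq hr hq).mp h')).symm
        have h2m : q * q ≠ m := by
          intro h
          rw [← hqr] at h
          exact hne (Nat.eq_of_mul_eq_mul_left (by omega) h)
        have := h5 q (q * q) hqN hq.one_lt (hplt q hq hqN) h2
          (by nlinarith) (lt_of_le_of_ne (Nat.le_of_dvd (by omega) h2) h2N)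
          hqm' h2m ⟨q, rfl⟩
        nlinarith
      · by_cases hsr : s = r
        · have h2 : r * r ∣ N := by
            rw [hk]
            exact mul_dvd_mul hrm (hsr ▸ hsk)
          have h2N : r * r ≠ N := by
            intro h
            have : q ∣ r * r := h ▸ hqN
            rcases (Nat.Prime.dvd_mul hq).mp this with h' | h' <;>
              exact hne ((Nat.prime_dvd_prime_iff_eq hq hr).mp h')
          have h2m : r * r ≠ m := by
            intro h
            rw [← hqr] at h
            have : r * r = r * q := by rw [h, Nat.mul_comm]
            exact hne (Nat.eq_of_mul_eq_mul_left (by omega) this).symm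
          have := h5 r (r * r) hrN hr.one_lt (hplt r hr hrN) h2
            (by nlinarith) (lt_of_le_of_ne (Nat.le_of_dvd (by omega) h2) h2N)
            hrm' h2m ⟨r, rfl⟩
          nlinarith
        · have h2 : q * s ∣ N := by
            rw [hk]
            exact mul_dvd_mul hqm hsk
          have h2N : q * s ≠ N := by
            intro h
            have : r ∣ q * s := h ▸ hrN
            rcases (Nat.Prime.dvd_mul hr).mp this with h' | h'
            · exact hne (((Nat.prime_dvd_prime_iff_eq hr hq).mp h')).symm
            · exact hsr (((Nat.prime_dvd_prime_iff_eq hr hsp).mp h')).symm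
          have h2m : q * s ≠ m := by
            intro h
            rw [← hqr] at h
            exact hsr (Nat.eq_of_mul_eq_mul_left (by omega) h)
          have := h5 q (q * s) hqN hq.one_lt (hplt q hq hqN) h2
            (by nlinarith) (lt_of_le_of_ne (Nat.le_of_dvd (by omega) h2) h2N)
            hqm' h2m ⟨s, rfl⟩
          nlinarith
    · have hqrN : q * r ∣ N := hqrm.trans hmd
      have := h5 q (q * r) hqN hq.one_lt (hplt q hq hqN) hqrN
        (by nlinarith) (lt_of_le_of_lt (Nat.le_of_dvd (by omega) hqrm) hmN)
        hqm' hqr ⟨r, rfl⟩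
      nlinarith
  set p := N.minFac with hp
  have hpp : p.Prime := Nat.minFac_prime (by omega)
  obtain ⟨a, ha⟩ : ∃ a, N = p ^ a :=
    ⟨_, Nat.eq_prime_pow_of_unique_prime_dvd hN0
      (fun {q} hq hqN => huniq q p hq (Nat.minFac_dvd N) hpp hqN)⟩
  refine ⟨p, hpp, ?_⟩
  rw [ha]
  obtain ⟨i, hia, hmi⟩ := (Nat.dvd_prime_pow hpp).mp (ha ▸ hmd)
  obtain ⟨d, hdN, hd1, hdlt, hdm⟩ := h4
  obtain ⟨j, hja, hdj⟩ := (Nat.dvd_prime_pow hpp).mp (ha ▸ hdN)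
  have hpinj : ∀ u v : ℕ, p ^ u = p ^ v → u = v :=
    fun u v h => Nat.pow_right_injective hpp.two_le h
  have hi0 : i ≠ 0 := by rintro rfl; simp at hmi; omega
  have hj0 : j ≠ 0 := by rintro rfl; simp at hdj; omega
  have hia' : i < a := by
    rw [hmi, ha] at hmN
    exact (Nat.pow_lt_pow_iff_right hpp.one_lt).mp hmN
  have hja' : j < a := by
    rw [hdj, ha] at hdlt
    exact (Nat.pow_lt_pow_iff_right hpp.one_lt).mp hdlt
  have hij : i ≠ j := fun h => hdm (by rw [hdj, hmi, h])
  have ha3 : 3 ≤ a := by omega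
  rcases eq_or_ne a 3 with rfl | hne3
  · rfl
  exfalso
  have ha4 : 4 ≤ a := by omega
  set u := if i = 1 then 2 else 1 with hu
  set v := if i = 3 then 2 else 3 with hv
  have huv : u < v := by rw [hu, hv]; split_ifs <;> omega
  have hui : u ≠ i := by rw [hu]; split_ifs <;> omega
  have hvi : v ≠ i := by rw [hv]; split_ifs <;> omega
  have hv3 : v ≤ 3 := by rw [hv]; split_ifs <;> omega
  have hu0 : u ≠ 0 := by rw [hu]; split_ifs <;> omega
  have hudN : p ^ u ∣ N := ha ▸ pow_dvd_pow p (by omega)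
  have hvdN : p ^ v ∣ N := ha ▸ pow_dvd_pow p (by omega)
  have h1u : 1 < p ^ u := Nat.one_lt_pow hu0 hpp.one_lt
  have h1v : 1 < p ^ v := Nat.one_lt_pow (by omega) hpp.one_lt
  have hultN : p ^ u < N := ha ▸ (Nat.pow_lt_pow_iff_right hpp.one_lt).mpr (by omega)
  have hvltN : p ^ v < N := ha ▸ (Nat.pow_lt_pow_iff_right hpp.one_lt).mpr (by omega)
  have hum : p ^ u ≠ m := fun h => hui (hpinj u i (h.trans hmi))
  have hvm : p ^ v ≠ m := fun h => hvi (hpinj v i (h.trans hmi))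
  have := h5 (p ^ u) (p ^ v) hudN h1u hultN hvdN h1v hvltN hum hvm
    (pow_dvd_pow p (le_of_lt huv))
  exact absurd (hpinj u v this) (by omega)

private lemma zpowers_isCyclic' {G : Type*} [Group G] (g : G) :
    IsCyclic (Subgroup.zpowers g) :=
  ⟨⟨⟨g, Subgroup.mem_zpowers g⟩, fun x => by
    obtain ⟨k, hk⟩ := x.2
    exact ⟨k, Subtype.ext (by simpa using hk)⟩⟩⟩

private lemma exists_mem_ne_one {G : Type*} [Group G] {H : Subgroup G} (h : H ≠ ⊥) :
    ∃ g : G, g ∈ H ∧ g ≠ 1 := by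
  obtain ⟨⟨g, hg⟩, hg1⟩ := Subgroup.ne_bot_iff_exists_ne_one.mp h
  exact ⟨g, hg, fun h' => hg1 (Subtype.ext h')⟩

theorem stmt9 (G : Type*) [Group G] [Finite G] :
    (∃ n : ℕ, 1 ≤ n ∧
        Nonempty (cyclicIntersectionGraph G ≃g completeBipartiteGraph (Fin 1) (Fin n))) ↔
      ∃ p : ℕ, p.Prime ∧ Nonempty (G ≃* Multiplicative (ZMod (p ^ 3))) := by
  classical
  constructor
  · rintro ⟨n, hn, ⟨φ⟩⟩
    set C₀ : CyclicVertex G := φ.symm (Sum.inl 0) with hC₀def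
    have hCbot : C₀.1 ≠ ⊥ := C₀.2.1
    have hCtop : C₀.1 ≠ ⊤ := C₀.2.2.1
    have hvne : ∀ A B : CyclicVertex G, A.1 ≠ B.1 → A ≠ B :=
      fun A B h hab => h (congrArg Subtype.val hab)
    have hinr : ∀ V : CyclicVertex G, V ≠ C₀ → ∃ j, φ V = Sum.inr j := by
      intro V hV
      rcases h : φ V with j | j
      · exfalso
        apply hV
        have h0 : φ V = Sum.inl 0 := by rw [h, Fin.eq_zero j]
        rw [hC₀def, ← h0, φ.symm_apply_apply]
      · exact ⟨j, rfl⟩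
    have star1 : ∀ V : CyclicVertex G, V ≠ C₀ → C₀.1 ⊓ V.1 ≠ ⊥ := by
      intro V hV
      obtain ⟨j, hj⟩ := hinr V hV
      have hadj : (cyclicIntersectionGraph G).Adj C₀ V := by
        rw [← φ.map_adj_iff, hj, hC₀def, φ.apply_symm_apply]
        simp [completeBipartiteGraph]
      exact hadj.2
    have star2 : ∀ U V : CyclicVertex G, U ≠ C₀ → V ≠ C₀ → U ≠ V → U.1 ⊓ V.1 = ⊥ := by
      intro U V hU hV hUV
      obtain ⟨j, hj⟩ := hinr U hU
      obtain ⟨k, hk⟩ := hinr V hV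
      have hnadj : ¬ (cyclicIntersectionGraph G).Adj U V := by
        rw [← φ.map_adj_iff, hj, hk]
        simp [completeBipartiteGraph]
      by_contra hne
      exact hnadj ⟨hUV, hne⟩
    have stepB : ∀ H : Subgroup G, H ≠ ⊥ → H ≠ ⊤ → IsCyclic H →
        H ≤ C₀.1 ∨ C₀.1 ≤ H := by
      intro H hb ht hc
      by_cases hHC : H = C₀.1
      · exact Or.inl (le_of_eq hHC)
      have hne : (⟨H, hb, ht, hc⟩ : CyclicVertex G) ≠ C₀ := hvne _ _ hHC
      have hint := star1 ⟨H, hb, ht, hc⟩ hne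
      obtain ⟨g, hgmem, hg1⟩ := exists_mem_ne_one hint
      obtain ⟨hgC, hgH⟩ := Subgroup.mem_inf.mp hgmem
      have hQb : Subgroup.zpowers g ≠ ⊥ :=
        fun h => hg1 (Subgroup.zpowers_eq_bot.mp h)
      have hQC : Subgroup.zpowers g ≤ C₀.1 := Subgroup.zpowers_le.mpr hgC
      have hQH : Subgroup.zpowers g ≤ H := Subgroup.zpowers_le.mpr hgH
      have hQt : Subgroup.zpowers g ≠ ⊤ :=
        fun h => hCtop (top_le_iff.mp (by rwa [h] at hQC))
      by_cases hQC' : Subgroup.zpowers g = C₀.1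
      · exact Or.inr (by rwa [hQC'] at hQH)
      by_cases hQH' : Subgroup.zpowers g = H
      · exact Or.inl (by rwa [hQH'] at hQC)
      · exfalso
        have hbot : Subgroup.zpowers g ⊓ H = ⊥ :=
          star2 ⟨Subgroup.zpowers g, hQb, hQt, zpowers_isCyclic' g⟩
            ⟨H, hb, ht, hc⟩ (hvne _ _ hQC') hne (hvne _ _ hQH')
        rw [inf_eq_left.mpr hQH] at hbot
        exact hQb hbot
    have uniqAbove : ∀ H K : Subgroup G,
        (H ≠ ⊥ ∧ H ≠ ⊤ ∧ IsCyclic H) → (K ≠ ⊥ ∧ K ≠ ⊤ ∧ IsCyclic K) →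
        C₀.1 ≤ H → C₀.1 ≤ K → H ≠ C₀.1 → K ≠ C₀.1 → H = K := by
      intro H K hH hK hCH hCK hHC hKC
      by_contra hne
      have hbot : H ⊓ K = ⊥ :=
        star2 ⟨H, hH⟩ ⟨K, hK⟩ (hvne _ _ hHC) (hvne _ _ hKC) (hvne _ _ hne)
      have hle : C₀.1 ≤ H ⊓ K := le_inf hCH hCK
      rw [hbot] at hle
      exact hCbot (le_bot_iff.mp hle)
    have hcy : ∃ g : G, Subgroup.zpowers g = ⊤ := by
      by_contra hng
      push_neg at hng
      have hvx : ∀ g : G, g ≠ 1 →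
          (Subgroup.zpowers g ≠ ⊥ ∧ Subgroup.zpowers g ≠ ⊤ ∧ IsCyclic (Subgroup.zpowers g)) :=
        fun g hg => ⟨fun h => hg (Subgroup.zpowers_eq_bot.mp h), hng g, zpowers_isCyclic' g⟩
      by_cases hX : ∃ H : Subgroup G, (H ≠ ⊥ ∧ H ≠ ⊤ ∧ IsCyclic H) ∧ C₀.1 < H
      · obtain ⟨H₀, hH₀, hlt⟩ := hX
        have : H₀ = ⊤ := by
          rw [Subgroup.eq_top_iff']
          intro g
          by_cases hg : g = 1
          · rw [hg]; exact H₀.one_mem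
          rcases stepB (Subgroup.zpowers g) (hvx g hg).1 (hvx g hg).2.1 (hvx g hg).2.2
            with h | h
          · exact (h.trans hlt.le) (Subgroup.mem_zpowers g)
          · by_cases hgc : Subgroup.zpowers g = C₀.1
            · exact hlt.le (hgc ▸ Subgroup.mem_zpowers g)
            · have heq := uniqAbove (Subgroup.zpowers g) H₀ (hvx g hg) hH₀ h hlt.le hgc
                (ne_of_gt hlt)
              exact heq ▸ Subgroup.mem_zpowers g
        exact hH₀.2.1 this
      · push_neg at hX
        have : C₀.1 = ⊤ := by
          rw [Subgroup.eq_top_iff']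
          intro g
          by_cases hg : g = 1
          · rw [hg]; exact C₀.1.one_mem
          rcases stepB (Subgroup.zpowers g) (hvx g hg).1 (hvx g hg).2.1 (hvx g hg).2.2
            with h | h
          · exact h (Subgroup.mem_zpowers g)
          · have heq : Subgroup.zpowers g = C₀.1 := by
              by_contra hne
              exact absurd (lt_of_le_of_ne h (Ne.symm hne)) (hX (Subgroup.zpowers g) (hvx g hg))
            exact heq ▸ Subgroup.mem_zpowers g
        exact hCtop this
    obtain ⟨g₀, hg₀⟩ := hcy
    have hGcyc : IsCyclic G := ⟨⟨g₀, fun x => by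
      have hx : x ∈ (⊤ : Subgroup G) := Subgroup.mem_top x
      rwa [← hg₀] at hx⟩⟩
    have hN0 : Nat.card G ≠ 0 := Nat.card_pos.ne'
    have hordg₀ : orderOf g₀ = Nat.card G := by
      rw [← Nat.card_zpowers, hg₀, Subgroup.card_top]
    have hcardHd : ∀ d : ℕ, d ∣ Nat.card G →
        Nat.card (Subgroup.zpowers (g₀ ^ (Nat.card G / d))) = d := by
      intro d hd
      rw [Nat.card_zpowers, ← hordg₀]
      exact orderOf_pow_orderOf_div (by rw [hordg₀]; exact hN0) (hordg₀ ▸ hd)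
    have hVxHd : ∀ d : ℕ, d ∣ Nat.card G → 1 < d → d < Nat.card G →
        (Subgroup.zpowers (g₀ ^ (Nat.card G / d)) ≠ ⊥ ∧
         Subgroup.zpowers (g₀ ^ (Nat.card G / d)) ≠ ⊤ ∧
         IsCyclic (Subgroup.zpowers (g₀ ^ (Nat.card G / d)))) := by
      intro d hd h1 h2
      refine ⟨?_, ?_, zpowers_isCyclic' _⟩
      · intro h
        have hc := hcardHd d hd
        rw [h, Subgroup.card_bot] at hc
        omega
      · intro h
        have hc := hcardHd d hd
        rw [h, Subgroup.card_top] at hc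
        omega
    have hmd : Nat.card C₀.1 ∣ Nat.card G := Subgroup.card_subgroup_dvd_card C₀.1
    have hm1 : 1 < Nat.card C₀.1 := by
      rcases Nat.lt_or_ge 1 (Nat.card C₀.1) with h | h
      · exact h
      have h1 : Nat.card C₀.1 = 1 := le_antisymm h Nat.card_pos
      exact absurd (Subgroup.card_eq_one.mp h1) hCbot
    have hmN : Nat.card C₀.1 < Nat.card G := by
      refine lt_of_le_of_ne (Nat.le_of_dvd (by omega) hmd) (fun h => hCtop ?_)
      exact Subgroup.eq_top_of_card_eq _ h
    have h1nt : ∀ d, d ∣ Nat.card G → 1 < d → d < Nat.card G →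
        d ∣ Nat.card C₀.1 ∨ Nat.card C₀.1 ∣ d := by
      intro d hd ha hb
      obtain ⟨x1, x2, x3⟩ := hVxHd d hd ha hb
      rcases stepB _ x1 x2 x3 with h | h
      · have := Subgroup.card_dvd_of_le h
        rw [hcardHd d hd] at this
        exact Or.inl this
      · have := Subgroup.card_dvd_of_le h
        rw [hcardHd d hd] at this
        exact Or.inr this
    have h5nt : ∀ d e, d ∣ Nat.card G → 1 < d → d < Nat.card G →
        e ∣ Nat.card G → 1 < e → e < Nat.card G →
        d ≠ Nat.card C₀.1 → e ≠ Nat.card C₀.1 → d ∣ e → d = e := by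
      intro d e hdN hd1 hdN' heN he1 heN' hdm hem hde
      have hd0 : 0 < d := by omega
      have hdle : Subgroup.zpowers (g₀ ^ (Nat.card G / d)) ≤
          Subgroup.zpowers (g₀ ^ (Nat.card G / e)) := by
        rw [Subgroup.zpowers_le]
        have harith : Nat.card G / d = (Nat.card G / e) * (e / d) := by
          obtain ⟨t, rfl⟩ := hde
          obtain ⟨s, hs⟩ := heN
          rw [hs, Nat.mul_div_cancel_left s (by positivity), mul_assoc,
            Nat.mul_div_cancel_left (t * s) hd0, Nat.mul_div_cancel_left t hd0,
            Nat.mul_comm]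
        rw [harith, pow_mul]
        exact Subgroup.pow_mem _ (Subgroup.mem_zpowers _) _
      by_cases heq : Subgroup.zpowers (g₀ ^ (Nat.card G / d)) =
          Subgroup.zpowers (g₀ ^ (Nat.card G / e))
      · rw [← hcardHd d hdN, ← hcardHd e heN, heq]
      · exfalso
        have hDC : Subgroup.zpowers (g₀ ^ (Nat.card G / d)) ≠ C₀.1 :=
          fun h => hdm (by rw [← hcardHd d hdN, h])
        have hEC : Subgroup.zpowers (g₀ ^ (Nat.card G / e)) ≠ C₀.1 :=
          fun h => hem (by rw [← hcardHd e heN, h])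
        have hbot : Subgroup.zpowers (g₀ ^ (Nat.card G / d)) ⊓
            Subgroup.zpowers (g₀ ^ (Nat.card G / e)) = ⊥ :=
          star2 ⟨_, hVxHd d hdN hd1 hdN'⟩ ⟨_, hVxHd e heN he1 heN'⟩
            (hvne _ _ hDC) (hvne _ _ hEC) (hvne _ _ heq)
        rw [inf_eq_left.mpr hdle] at hbot
        exact (hVxHd d hdN hd1 hdN').1 hbot
    have h4nt : ∃ d, d ∣ Nat.card G ∧ 1 < d ∧ d < Nat.card G ∧ d ≠ Nat.card C₀.1 := by
      set L₀ : CyclicVertex G := φ.symm (Sum.inr ⟨0, hn⟩) with hL₀def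
      have hL₀ : L₀ ≠ C₀ := by
        intro h
        have := φ.symm.injective (h : φ.symm (Sum.inr ⟨0, hn⟩) = φ.symm (Sum.inl 0))
        simp at this
      refine ⟨Nat.card L₀.1, Subgroup.card_subgroup_dvd_card L₀.1, ?_, ?_, ?_⟩
      · rcases Nat.lt_or_ge 1 (Nat.card L₀.1) with h | h
        · exact h
        have h1 : Nat.card L₀.1 = 1 := le_antisymm h Nat.card_pos
        exact absurd (Subgroup.card_eq_one.mp h1) L₀.2.1
      · refine lt_of_le_of_ne (Nat.le_of_dvd (by omega) (Subgroup.card_subgroup_dvd_card L₀.1))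
          (fun h => L₀.2.2.1 ?_)
        exact Subgroup.eq_top_of_card_eq _ h
      · intro h
        rcases stepB L₀.1 L₀.2.1 L₀.2.2.1 L₀.2.2.2 with hle | hle
        · have heq : L₀.1 = C₀.1 := Subgroup.eq_of_le_of_card_ge hle (le_of_eq h.symm)
          exact hL₀ (Subtype.ext heq)
        · have heq : C₀.1 = L₀.1 := Subgroup.eq_of_le_of_card_ge hle (le_of_eq h)
          exact hL₀ (Subtype.ext heq.symm)
    obtain ⟨p, hpp, hN3⟩ := nt_aux (Nat.card G) (Nat.card C₀.1) hm1 hmN hmd h1nt h5nt h4nt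
    exact ⟨p, hpp, ⟨hN3 ▸ (zmodCyclicMulEquiv hGcyc).symm⟩⟩
  · rintro ⟨p, hpp, ⟨e⟩⟩
    have hp1 : 1 < p := hpp.one_lt
    have hcard : Nat.card G = p ^ 3 := by
      rw [Nat.card_congr (e.toEquiv.trans Multiplicative.toAdd), Nat.card_zmod]
    have hGcyc : IsCyclic G := isCyclic_of_surjective e.symm.toMonoidHom e.symm.surjective
    obtain ⟨g₀, hgen⟩ := hGcyc.exists_generator
    have hg₀ : Subgroup.zpowers g₀ = ⊤ := by
      rw [Subgroup.eq_top_iff']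
      exact hgen
    have hord : orderOf g₀ = p ^ 3 := by
      rw [← Nat.card_zpowers, hg₀, Subgroup.card_top, hcard]
    have hord0 : orderOf g₀ ≠ 0 := by rw [hord]; positivity
    have h31 : p ^ 3 / p = p ^ 2 := by
      rw [pow_succ, Nat.mul_div_cancel _ (by omega)]
    have h32 : p ^ 3 / p ^ 2 = p := by
      rw [pow_succ, Nat.mul_div_cancel_left _ (by positivity)]
    have hcA : Nat.card (Subgroup.zpowers (g₀ ^ (p ^ 3 / p))) = p := by
      rw [Nat.card_zpowers, ← hord]
      exact orderOf_pow_orderOf_div hord0 (by rw [hord]; exact ⟨p ^ 2, by ring⟩)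
    have hcB : Nat.card (Subgroup.zpowers (g₀ ^ (p ^ 3 / p ^ 2))) = p ^ 2 := by
      rw [Nat.card_zpowers, ← hord]
      exact orderOf_pow_orderOf_div hord0 (by rw [hord]; exact ⟨p, by ring⟩)
    have hAB : Subgroup.zpowers (g₀ ^ (p ^ 3 / p)) ≤ Subgroup.zpowers (g₀ ^ (p ^ 3 / p ^ 2)) := by
      rw [Subgroup.zpowers_le, h31, h32, pow_two, pow_mul]
      exact Subgroup.pow_mem _ (Subgroup.mem_zpowers _) _
    -- uniqueness of subgroups of a given order
    have huniq : ∀ V : Subgroup G, V ≤ Subgroup.zpowers (g₀ ^ (p ^ 3 / Nat.card V)) := by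
      intro V x hx
      have hx1 : x ^ (Nat.card V) = 1 :=
        orderOf_dvd_iff_pow_eq_one.mp (V.orderOf_dvd_natCard hx)
      obtain ⟨k, hk⟩ := Subgroup.mem_zpowers_iff.mp (hgen x)
      have hzp : g₀ ^ (k * (Nat.card V : ℤ)) = 1 := by
        rw [zpow_mul, zpow_natCast, hk, hx1]
      have hdvd : ((orderOf g₀ : ℤ)) ∣ k * (Nat.card V : ℤ) :=
        orderOf_dvd_iff_zpow_eq_one.mpr hzp
      rw [hord] at hdvd
      have hc0 : 0 < Nat.card V := Nat.card_pos
      obtain ⟨s, hs⟩ := hcard ▸ Subgroup.card_subgroup_dvd_card V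
      have hsc : p ^ 3 / Nat.card V = s := by
        rw [hs, Nat.mul_div_cancel_left s hc0]
      have hsk : (s : ℤ) ∣ k := by
        obtain ⟨t, ht⟩ := hdvd
        refine ⟨t, ?_⟩
        have hcast : ((Nat.card V : ℤ)) * k = (Nat.card V : ℤ) * (s * t) := by
          push_cast [hs] at ht ⊢
          linarith [ht]
        exact Int.eq_of_mul_eq_mul_left (by exact_mod_cast hc0.ne') hcast
      obtain ⟨t, rfl⟩ := hsk
      rw [hsc]
      refine Subgroup.mem_zpowers_iff.mpr ⟨t, ?_⟩
      rw [← zpow_natCast g₀ s, ← zpow_mul]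
      exact hk
    have h1p2 : 1 < p ^ 2 := Nat.one_lt_pow (by omega) hp1
    have hpp2 : p < p ^ 2 := by
      have := (Nat.pow_lt_pow_iff_right hp1).mpr (show 1 < 2 by omega)
      rwa [pow_one] at this
    have hp3 : p < p ^ 3 := by
      have := (Nat.pow_lt_pow_iff_right hp1).mpr (show 1 < 3 by omega)
      rwa [pow_one] at this
    have hp23 : p ^ 2 < p ^ 3 := (Nat.pow_lt_pow_iff_right hp1).mpr (by omega)
    set A : Subgroup G := Subgroup.zpowers (g₀ ^ (p ^ 3 / p)) with hAdef
    set B : Subgroup G := Subgroup.zpowers (g₀ ^ (p ^ 3 / p ^ 2)) with hBdef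
    have hAb : A ≠ ⊥ := fun h => by rw [h, Subgroup.card_bot] at hcA; omega
    have hAt : A ≠ ⊤ := fun h => by rw [h, Subgroup.card_top, hcard] at hcA; omega
    have hBb : B ≠ ⊥ := fun h => by rw [h, Subgroup.card_bot] at hcB; omega
    have hBt : B ≠ ⊤ := fun h => by rw [h, Subgroup.card_top, hcard] at hcB; omega
    have hABne : A ≠ B := fun h => by
      have hc := hcA
      rw [h, hcB] at hc
      omega
    have hclass : ∀ V : CyclicVertex G, V.1 = A ∨ V.1 = B := by
      intro V
      obtain ⟨hb, ht, hcyc⟩ := V.2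
      have hdv : Nat.card V.1 ∣ p ^ 3 := hcard ▸ Subgroup.card_subgroup_dvd_card V.1
      obtain ⟨j, hj3, hcV⟩ := (Nat.dvd_prime_pow hpp).mp hdv
      have hj0 : j ≠ 0 := by
        rintro rfl
        rw [pow_zero] at hcV
        exact hb (Subgroup.card_eq_one.mp hcV)
      have hj3' : j ≠ 3 := by
        rintro rfl
        exact ht (Subgroup.eq_top_of_card_eq _ (by rw [hcV, hcard]))
      have hVle := huniq V.1
      have hj12 : j = 1 ∨ j = 2 := by omega
      rcases hj12 with rfl | rfl
      · left
        rw [hcV, pow_one] at hVle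
        exact Subgroup.eq_of_le_of_card_ge hVle (by rw [hcA, hcV, pow_one])
      · right
        rw [hcV] at hVle
        exact Subgroup.eq_of_le_of_card_ge hVle (by rw [hcB, hcV])
    refine ⟨1, le_refl 1, ⟨?_⟩⟩
    let vA : CyclicVertex G := ⟨A, hAb, hAt, zpowers_isCyclic' _⟩
    let vB : CyclicVertex G := ⟨B, hBb, hBt, zpowers_isCyclic' _⟩
    have hvAB : vA ≠ vB := fun h => hABne (congrArg Subtype.val h)
    have hdi : ∀ V : CyclicVertex G, V = vA ∨ V = vB := by
      intro V
      rcases hclass V with h | h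
      · exact Or.inl (Subtype.ext h)
      · exact Or.inr (Subtype.ext h)
    have hadjAB : (cyclicIntersectionGraph G).Adj vA vB :=
      ⟨hvAB, by
        show A ⊓ B ≠ ⊥
        rw [inf_eq_left.mpr hAB]
        exact hAb⟩
    have hfA : (if vA = vA then (Sum.inl 0 : Fin 1 ⊕ Fin 1) else Sum.inr 0) = Sum.inl 0 :=
      if_pos rfl
    have hfB : (if vB = vA then (Sum.inl 0 : Fin 1 ⊕ Fin 1) else Sum.inr 0) = Sum.inr 0 :=
      if_neg (Ne.symm hvAB)
    refine ⟨⟨fun V => if V = vA then Sum.inl 0 else Sum.inr 0,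
      Sum.elim (fun _ => vA) (fun _ => vB), ?_, ?_⟩, ?_⟩
    · intro V
      rcases hdi V with rfl | rfl
      · show Sum.elim (fun _ => vA) (fun _ => vB)
          (if vA = vA then Sum.inl 0 else Sum.inr 0) = vA
        rw [hfA]
        rfl
      · show Sum.elim (fun _ => vA) (fun _ => vB)
          (if vB = vA then Sum.inl 0 else Sum.inr 0) = vB
        rw [hfB]
        rfl
    · rintro (j | j) <;> rw [Fin.eq_zero j]
      · show (if vA = vA then (Sum.inl 0 : Fin 1 ⊕ Fin 1) else Sum.inr 0) = Sum.inl 0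
        rw [hfA]
      · show (if vB = vA then (Sum.inl 0 : Fin 1 ⊕ Fin 1) else Sum.inr 0) = Sum.inr 0
        rw [hfB]
    · intro a b
      rcases hdi a with rfl | rfl <;> rcases hdi b with rfl | rfl
      · constructor
        · intro h
          exact absurd h (SimpleGraph.irrefl _)
        · intro h
          exact absurd rfl h.1
      · constructor
        · intro _
          exact hadjAB
        · intro _
          show (completeBipartiteGraph (Fin 1) (Fin 1)).Adj
            (if vA = vA then Sum.inl 0 else Sum.inr 0)
            (if vB = vA then Sum.inl 0 else Sum.inr 0)
          rw [hfA, hfB]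
          simp [completeBipartiteGraph]
      · constructor
        · intro _
          exact hadjAB.symm
        · intro _
          show (completeBipartiteGraph (Fin 1) (Fin 1)).Adj
            (if vB = vA then Sum.inl 0 else Sum.inr 0)
            (if vA = vA then Sum.inl 0 else Sum.inr 0)
          rw [hfA, hfB]
          simp [completeBipartiteGraph]
      · constructor
        · intro h
          exact absurd h (SimpleGraph.irrefl _)
        · intro h
          exact absurd rfl h.1
end

section
/- Let G be a finite group. The intersection graph of cyclic subgroups I_c(G) is a cycle C_n if and only if n = 3 and G ≅ Z_{p^4} for some prime p. -/
open Subgroup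

section Aux

variable {G : Type*} [Group G]

lemma aux_isCyclic_zpowers (g : G) : IsCyclic (zpowers g) := by
  refine ⟨⟨⟨g, mem_zpowers g⟩, ?_⟩⟩
  rintro ⟨x, k, hk⟩
  exact ⟨k, Subtype.ext (by simpa using hk)⟩

lemma aux_subgroup_eq_of_card_eq [Finite G] [IsCyclic G] {H K : Subgroup G}
    (h : Nat.card H = Nat.card K) : H = K := by
  classical
  cases nonempty_fintype G
  set d := Nat.card H with hd
  have hd0 : 0 < d := Nat.card_pos
  have hkey : ∀ L : Subgroup G, Nat.card L = d →
      (L : Set G).toFinset = Finset.univ.filter (fun a : G => a ^ d = 1) := by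
    intro L hL
    apply Finset.eq_of_subset_of_card_le
    · intro x hx
      simp only [Set.mem_toFinset, SetLike.mem_coe] at hx
      have h1 : (⟨x, hx⟩ : L) ^ d = 1 := by rw [← hL]; exact pow_card_eq_one'
      have h2 : x ^ d = 1 := by simpa using congrArg Subtype.val h1
      simp [h2]
    · calc (Finset.univ.filter (fun a : G => a ^ d = 1)).card
          ≤ d := IsCyclic.card_pow_eq_one_le hd0
        _ = (L : Set G).toFinset.card := by
            rw [Set.toFinset_card, ← hL, Nat.card_eq_fintype_card]
            rfl
  apply SetLike.coe_injective
  rw [← Set.toFinset_inj, hkey H rfl, hkey K h.symm]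

lemma aux_exists_subgroup_card_eq [Finite G] [IsCyclic G] {d : ℕ} (hd : d ∣ Nat.card G) :
    ∃ H : Subgroup G, Nat.card H = d := by
  obtain ⟨g, hg⟩ := IsCyclic.exists_generator (α := G)
  have hN : orderOf g = Nat.card G := orderOf_eq_card_of_forall_mem_zpowers hg
  have hN0 : Nat.card G ≠ 0 := Nat.card_pos.ne'
  have hd0 : d ≠ 0 := by rintro rfl; exact hN0 (Nat.eq_zero_of_zero_dvd hd)
  refine ⟨zpowers (g ^ (Nat.card G / d)), ?_⟩
  rw [Nat.card_zpowers, orderOf_pow, hN,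
    Nat.gcd_eq_right (Nat.div_dvd_of_dvd hd), Nat.div_div_self hd hN0]

lemma aux_le_of_inf_ne_bot [Finite G] {P A : Subgroup G} (hp : (Nat.card P).Prime)
    (h : P ⊓ A ≠ ⊥) : P ≤ A := by
  have h1 : Nat.card ↥(P ⊓ A) ∣ Nat.card P := card_dvd_of_le inf_le_left
  have h2 : Nat.card ↥(P ⊓ A) ≠ 1 := by rwa [Ne, Subgroup.card_eq_one]
  have h3 : Nat.card ↥(P ⊓ A) = Nat.card P := ((Nat.dvd_prime hp).mp h1).resolve_left h2
  have h4 : P ⊓ A = P := Subgroup.eq_of_le_of_card_ge inf_le_left h3.ge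
  rw [← h4]; exact inf_le_right

lemma aux_exists_prime_order_le [Finite G] {A : Subgroup G} (hA : A ≠ ⊥) :
    ∃ g : G, (orderOf g).Prime ∧ g ∈ A := by
  obtain ⟨a, ha⟩ := Subgroup.ne_bot_iff_exists_ne_one.mp hA
  have hnt : Nontrivial A := ⟨a, 1, ha⟩
  have h1 : 1 < Nat.card A := Finite.one_lt_card_iff_nontrivial.mpr hnt
  have hp : (Nat.card ↥A).minFac.Prime := Nat.minFac_prime h1.ne'
  haveI : Fact (Nat.card ↥A).minFac.Prime := ⟨hp⟩
  obtain ⟨y, hy⟩ := exists_prime_orderOf_dvd_card' (G := ↥A) _ (Nat.minFac_dvd _)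
  exact ⟨(y : G), by rw [orderOf_coe, hy]; exact hp, y.2⟩

lemma aux_not_forall_mem_union {A B : Subgroup G} (hA : A ≠ ⊤) (hB : B ≠ ⊤)
    (h : ∀ x : G, x ∈ A ∨ x ∈ B) : False := by
  obtain ⟨a, ha⟩ : ∃ a, a ∉ A := by
    by_contra hc; push_neg at hc; exact hA ((eq_top_iff' _).mpr hc)
  obtain ⟨b, hb⟩ : ∃ b, b ∉ B := by
    by_contra hc; push_neg at hc; exact hB ((eq_top_iff' _).mpr hc)
  have haB : a ∈ B := (h a).resolve_left ha
  have hbA : b ∈ A := (h b).resolve_right hb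
  rcases h (a * b) with hab | hab
  · exact ha ((Subgroup.mul_mem_cancel_right A hbA).mp hab)
  · exact hb ((Subgroup.mul_mem_cancel_left B haB).mp hab)

lemma aux_inf_ne_bot [Finite G] [IsCyclic G] {p k : ℕ} (hp : p.Prime)
    (hc : Nat.card G = p ^ k) {A B : Subgroup G} (hA : A ≠ ⊥) (hB : B ≠ ⊥) :
    A ⊓ B ≠ ⊥ := by
  obtain ⟨a, hpa, haA⟩ := aux_exists_prime_order_le hA
  obtain ⟨b, hpb, hbB⟩ := aux_exists_prime_order_le hB
  have horder : ∀ c : G, (orderOf c).Prime → orderOf c = p := by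
    intro c hpc
    have h1 : orderOf c ∣ p ^ k := hc ▸ orderOf_dvd_natCard c
    exact (Nat.prime_dvd_prime_iff_eq hpc hp).mp (hpc.dvd_of_dvd_pow h1)
  have heq : zpowers a = zpowers b := aux_subgroup_eq_of_card_eq
    (by rw [Nat.card_zpowers, Nat.card_zpowers, horder a hpa, horder b hpb])
  intro hbot
  have haB : a ∈ B := zpowers_le.mpr hbB (heq ▸ mem_zpowers a)
  have hmem : a ∈ A ⊓ B := ⟨haA, haB⟩
  rw [hbot, Subgroup.mem_bot] at hmem
  rw [hmem, orderOf_one] at hpa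
  exact Nat.not_prime_one hpa

lemma aux_cyclicVertex_equiv [Finite G] [IsCyclic G] {p k : ℕ} (hp : p.Prime)
    (hc : Nat.card G = p ^ k) : Nonempty (CyclicVertex G ≃ Fin (k - 1)) := by
  classical
  have hdvd : ∀ V : CyclicVertex G, ∃ j, j ≠ 0 ∧ j < k ∧ Nat.card V.1 = p ^ j := by
    intro V
    obtain ⟨j, hjk, hcard⟩ := (Nat.dvd_prime_pow hp).mp (hc ▸ card_subgroup_dvd_card V.1)
    refine ⟨j, ?_, ?_, hcard⟩
    · rintro rfl
      exact V.2.1 (Subgroup.card_eq_one.mp (by simpa using hcard))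
    · rcases lt_or_eq_of_le hjk with h | rfl
      · exact h
      · exact absurd ((Subgroup.card_eq_iff_eq_top _).mp (by rw [hcard, hc])) V.2.2.1
  choose j hj0 hjk hjcard using hdvd
  refine ⟨Equiv.ofBijective
    (fun V => ⟨j V - 1, by have := hj0 V; have := hjk V; omega⟩) ⟨?_, ?_⟩⟩
  · intro V W h
    have hval : j V - 1 = j W - 1 := congrArg Fin.val h
    have hjj : j V = j W := by have := hj0 V; have := hj0 W; omega
    exact Subtype.ext (aux_subgroup_eq_of_card_eq (by rw [hjcard V, hjcard W, hjj]))
  · intro i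
    have hik : i.val + 1 ≤ k := by have := i.isLt; omega
    obtain ⟨H, hH⟩ := aux_exists_subgroup_card_eq (G := G) (d := p ^ (i.val + 1))
      (hc ▸ pow_dvd_pow p hik)
    have hHbot : H ≠ ⊥ := by
      intro h
      rw [h, Subgroup.card_bot] at hH
      exact absurd hH.symm (Nat.one_lt_pow (by omega) hp.one_lt).ne'
    have hHtop : H ≠ ⊤ := by
      intro h
      rw [h, Subgroup.card_top, hc] at hH
      have := Nat.pow_right_injective hp.two_le hH
      omega
    set V : CyclicVertex G := ⟨H, hHbot, hHtop, Subgroup.isCyclic H⟩ with hV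
    refine ⟨V, ?_⟩
    have hcV : Nat.card V.1 = p ^ (i.val + 1) := hH
    have : p ^ j V = p ^ (i.val + 1) := by rw [← hjcard V, hcV]
    have hjV : j V = i.val + 1 := Nat.pow_right_injective hp.two_le this
    exact Fin.ext (by simp [hjV])

lemma aux_iso_of_card_p4 [Finite G] [IsCyclic G] {p : ℕ} (hp : p.Prime)
    (hc : Nat.card G = p ^ 4) :
    Nonempty (cyclicIntersectionGraph G ≃g SimpleGraph.cycleGraph 3) := by
  obtain ⟨e⟩ := aux_cyclicVertex_equiv hp hc
  refine ⟨⟨e, ?_⟩⟩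
  intro A B
  rw [SimpleGraph.cycleGraph_three_eq_top]
  simp only [SimpleGraph.top_adj]
  constructor
  · intro h
    exact ⟨fun hab => h (by rw [hab]), aux_inf_ne_bot hp hc A.2.1 B.2.1⟩
  · rintro ⟨h1, -⟩
    exact fun hEq => h1 (e.injective hEq)

end Aux

open Fin.CommRing Fin.NatCast

theorem stmt11 (G : Type*) [Group G] [Finite G] (n : ℕ) (hn : 3 ≤ n) :
    Nonempty (cyclicIntersectionGraph G ≃g SimpleGraph.cycleGraph n) ↔
      (n = 3 ∧ ∃ p : ℕ, p.Prime ∧ Nonempty (G ≃* Multiplicative (ZMod (p ^ 4)))) := by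
  constructor
  · rintro ⟨f⟩
    obtain ⟨m, rfl⟩ : ∃ m, n = m + 3 := ⟨n - 3, by omega⟩
    have finj : Function.Injective f := f.toEquiv.injective
    have hthree : ∀ u v : Fin 3, u = v ∨ u = v + 1 ∨ u = v - 1 := by decide
    -- G is nontrivial
    set v0 : CyclicVertex G := f.symm ⟨0, by omega⟩ with hv0
    obtain ⟨x0, hx0⟩ := Subgroup.ne_bot_iff_exists_ne_one.mp v0.2.1
    have hGnt : Nontrivial G := ⟨(x0 : G), 1, fun h => hx0 (Subtype.ext h)⟩
    have hcard1 : Nat.card G ≠ 1 := by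
      have := Finite.one_lt_card_iff_nontrivial.mpr hGnt; omega
    set p := (Nat.card G).minFac with hpdef
    have hp : p.Prime := Nat.minFac_prime hcard1
    haveI : Fact p.Prime := ⟨hp⟩
    have hpdvd : p ∣ Nat.card G := Nat.minFac_dvd _
    obtain ⟨g, hg⟩ := exists_prime_orderOf_dvd_card' (G := G) p hpdvd
    set P := zpowers g with hPdef
    have hcardP : Nat.card P = p := by rw [hPdef, Nat.card_zpowers, hg]
    have hPbot : P ≠ ⊥ := by
      rw [hPdef, Ne, zpowers_eq_bot]
      rintro rfl
      rw [orderOf_one] at hg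
      exact hp.one_lt.ne' hg.symm
    have absorb : ∀ A : Subgroup G, P ⊓ A ≠ ⊥ → P ≤ A := fun A hA =>
      aux_le_of_inf_ne_bot (by rw [hcardP]; exact hp) hA
    have hPtop : P ≠ ⊤ := by
      intro h
      have hGP : Nat.card G = p := by rw [← hcardP, h, Subgroup.card_top]
      have h1 : Nat.card v0.1 ∣ p := hGP ▸ card_subgroup_dvd_card v0.1
      have h2 : Nat.card v0.1 ≠ 1 := by rw [Ne, Subgroup.card_eq_one]; exact v0.2.1
      have h3 : Nat.card v0.1 = Nat.card G := by
        rw [hGP]; exact ((Nat.dvd_prime hp).mp h1).resolve_left h2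
      exact v0.2.2.1 ((Subgroup.card_eq_iff_eq_top _).mp h3)
    set vP : CyclicVertex G := ⟨P, hPbot, hPtop, aux_isCyclic_zpowers g⟩ with hvP
    have hvP1 : vP.1 = P := rfl
    set w : Fin (m + 3) := f vP with hw
    set A : CyclicVertex G := f.symm (w + 1) with hA
    set B : CyclicVertex G := f.symm (w - 1) with hB
    haveI : NeZero (m + 3) := ⟨by omega⟩
    have hsymmw : f.symm w = vP := by rw [hw]; exact f.toEquiv.symm_apply_apply vP
    have hadj1 : (cyclicIntersectionGraph G).Adj vP A := by
      have h1 : (SimpleGraph.cycleGraph (m + 3)).Adj w (w + 1) :=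
        (SimpleGraph.cycleGraph_adj (n := m + 1)).mpr (Or.inr (by ring))
      have h2 : (cyclicIntersectionGraph G).Adj (f.symm w) (f.symm (w + 1)) :=
        f.symm.map_rel_iff.mpr h1
      rw [hsymmw] at h2
      rw [hA]
      exact h2
    have hadj2 : (cyclicIntersectionGraph G).Adj vP B := by
      have h1 : (SimpleGraph.cycleGraph (m + 3)).Adj w (w - 1) :=
        (SimpleGraph.cycleGraph_adj (n := m + 1)).mpr (Or.inl (by ring))
      have h2 : (cyclicIntersectionGraph G).Adj (f.symm w) (f.symm (w - 1)) :=
        f.symm.map_rel_iff.mpr h1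
      rw [hsymmw] at h2
      rw [hB]
      exact h2
    have hPA : P ≤ A.1 := absorb A.1 hadj1.2
    have hPB : P ≤ B.1 := absorb B.1 hadj2.2
    have hAB : A ≠ B := by
      intro h
      rw [hA, hB] at h
      have h1 : w + 1 = w - 1 := f.toEquiv.symm.injective h
      have h2 : ((2 : ℕ) : Fin (m + 3)) = 0 := by push_cast; linear_combination h1
      have h3 := (CharP.cast_eq_zero_iff (Fin (m + 3)) (m + 3) 2).mp h2
      have := Nat.le_of_dvd (by norm_num) h3
      omega
    have hadj3 : (cyclicIntersectionGraph G).Adj A B :=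
      ⟨hAB, fun h => hPbot (le_bot_iff.mp (h ▸ le_inf hPA hPB))⟩
    have hadj4 : (SimpleGraph.cycleGraph (m + 3)).Adj (w + 1) (w - 1) := by
      rw [hA, hB] at hadj3
      exact f.symm.map_rel_iff.mp hadj3
    have hm : m = 0 := by
      rcases (SimpleGraph.cycleGraph_adj (n := m + 1)).mp hadj4 with h | h
      · have h2 : ((1 : ℕ) : Fin (m + 3)) = 0 := by push_cast; linear_combination h
        have h3 := (CharP.cast_eq_zero_iff (Fin (m + 3)) (m + 3) 1).mp h2
        have := Nat.le_of_dvd (by norm_num) h3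
        omega
      · have h2 : ((3 : ℕ) : Fin (m + 3)) = 0 := by push_cast; linear_combination -h
        have h3 := (CharP.cast_eq_zero_iff (Fin (m + 3)) (m + 3) 3).mp h2
        have := Nat.le_of_dvd (by norm_num) h3
        omega
    subst hm
    -- completeness
    have hcover : ∀ u v : Fin (0 + 3), u ≠ v → (SimpleGraph.cycleGraph (0 + 3)).Adj u v := by
      decide
    have complete : ∀ X Y : CyclicVertex G, X ≠ Y → (cyclicIntersectionGraph G).Adj X Y :=
      fun X Y hXY => f.map_rel_iff.mp (hcover (f X) (f Y) (fun h => hXY (finj h)))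
    -- every vertex contains P
    have containsP : ∀ V : CyclicVertex G, P ≤ V.1 := by
      intro V
      obtain ⟨c, hpc, hcV⟩ := aux_exists_prime_order_le V.2.1
      have hQbot : zpowers c ≠ ⊥ := by
        rw [Ne, zpowers_eq_bot]
        rintro rfl
        rw [orderOf_one] at hpc
        exact Nat.not_prime_one hpc
      have hQle : zpowers c ≤ V.1 := zpowers_le.mpr hcV
      have hQtop : zpowers c ≠ ⊤ := fun h => V.2.2.1 (top_le_iff.mp ((le_of_eq h.symm).trans hQle))
      set vQ : CyclicVertex G := ⟨zpowers c, hQbot, hQtop, aux_isCyclic_zpowers c⟩ with hvQ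
      by_cases hQP : vQ = vP
      · have h1 : zpowers c = P := congrArg Subtype.val hQP
        exact (le_of_eq h1.symm).trans hQle
      · have hadj := complete vQ vP hQP
        have h1 : P ⊓ zpowers c ≠ ⊥ := by rw [inf_comm]; exact hadj.2
        exact (absorb _ h1).trans hQle
    -- G is cyclic
    have hcyc : IsCyclic G := by
      by_contra hnc
      have hne : ∀ x : G, zpowers x ≠ ⊤ := by
        intro x hx
        exact hnc ⟨⟨x, (Subgroup.eq_top_iff' (zpowers x)).mp hx⟩⟩
      have hkey : ∀ x : G, x ∈ A.1 ∨ x ∈ B.1 := by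
        intro x
        by_cases hx1 : x = 1
        · exact Or.inl (by rw [hx1]; exact A.1.one_mem)
        · set vx : CyclicVertex G :=
            ⟨zpowers x, by rwa [Ne, zpowers_eq_bot], hne x, aux_isCyclic_zpowers x⟩ with hvx
          rcases hthree (f vx) w with h | h | h
          · have hxP : vx = vP := finj (h.trans hw)
            have h1 : zpowers x ≤ A.1 :=
              (le_of_eq (congrArg Subtype.val hxP)).trans hPA
            exact Or.inl (h1 (mem_zpowers x))
          · have hfA : f A = w + 1 := by rw [hA]; exact f.toEquiv.apply_symm_apply _
            have hxA : vx = A := finj (h.trans hfA.symm)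
            have h1 : zpowers x = A.1 := congrArg Subtype.val hxA
            exact Or.inl (h1 ▸ mem_zpowers x)
          · have hfB : f B = w - 1 := by rw [hB]; exact f.toEquiv.apply_symm_apply _
            have hxB : vx = B := finj (h.trans hfB.symm)
            have h1 : zpowers x = B.1 := congrArg Subtype.val hxB
            exact Or.inr (h1 ▸ mem_zpowers x)
      exact aux_not_forall_mem_union A.2.2.1 B.2.2.1 hkey
    -- G is a p-group
    have huniq : ∀ {q : ℕ}, q.Prime → q ∣ Nat.card G → q = p := by
      intro q hq hqd
      haveI : Fact q.Prime := ⟨hq⟩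
      obtain ⟨h0, hh0⟩ := exists_prime_orderOf_dvd_card' (G := G) q hqd
      by_cases htop : zpowers h0 = ⊤
      · have hcq : Nat.card G = q := by
          rw [← Subgroup.card_top (G := G), ← htop, Nat.card_zpowers, hh0]
        exact ((Nat.prime_dvd_prime_iff_eq hp hq).mp (hcq ▸ hpdvd)).symm
      · have hbot' : zpowers h0 ≠ ⊥ := by
          rw [Ne, zpowers_eq_bot]
          rintro rfl
          rw [orderOf_one] at hh0
          exact hq.one_lt.ne' hh0.symm
        have hle : P ≤ zpowers h0 :=
          containsP ⟨zpowers h0, hbot', htop, aux_isCyclic_zpowers h0⟩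
        have h1 : p ∣ q := by
          have h2 : Nat.card P ∣ Nat.card (zpowers h0) := card_dvd_of_le hle
          rwa [hcardP, Nat.card_zpowers, hh0] at h2
        exact ((Nat.prime_dvd_prime_iff_eq hp hq).mp h1).symm
    have hppow : Nat.card G = p ^ (Nat.card G).primeFactorsList.length :=
      Nat.eq_prime_pow_of_unique_prime_dvd Nat.card_pos.ne' huniq
    obtain ⟨e'⟩ := aux_cyclicVertex_equiv hp hppow
    have h3 : (Nat.card G).primeFactorsList.length - 1 = 3 := by
      have hcc := Fintype.card_congr (e'.symm.trans f.toEquiv)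
      simpa using hcc
    have hk4 : (Nat.card G).primeFactorsList.length = 4 := by omega
    rw [hk4] at hppow
    refine ⟨rfl, p, hp, ?_⟩
    have hfinal : Multiplicative (ZMod (Nat.card G)) ≃* G := zmodCyclicMulEquiv hcyc
    rw [hppow] at hfinal
    exact ⟨hfinal.symm⟩
  · rintro ⟨rfl, p, hp, ⟨φ⟩⟩
    haveI : IsCyclic G := isCyclic_of_surjective φ.symm φ.symm.surjective
    have hc : Nat.card G = p ^ 4 :=
      (Nat.card_congr (φ.toEquiv.trans Multiplicative.toAdd)).trans (Nat.card_zmod _)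
    exact aux_iso_of_card_p4 hp hc
end

section
/- For any finite group G, the girth of the intersection graph of cyclic subgroups I_c(G) is either 3 or infinity; i.e., if I_c(G) contains any cycle then it contains a triangle. -/
open SimpleGraph in
/-- A triangle bounds the extended girth by 3. -/
lemma aux_triangle_egirth_le {V : Type*} (G' : SimpleGraph V) {a b c : V}
    (hab : G'.Adj a b) (hbc : G'.Adj b c) (hca : G'.Adj c a) : G'.egirth ≤ 3 := by
  have hcyc : (Walk.cons hab (Walk.cons hbc (Walk.cons hca Walk.nil))).IsCycle := by
    simp [Walk.isCycle_def, Walk.isTrail_def, hab.ne, hbc.ne, hca.ne, hab.ne', hbc.ne', hca.ne',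
      Sym2.eq, Sym2.rel_iff]
  have h : G'.egirth ≤ ((Walk.cons hab (Walk.cons hbc (Walk.cons hca Walk.nil))).length : ℕ∞) := by
    rw [SimpleGraph.egirth]
    exact iInf₂_le_of_le a _ (iInf_le_of_le hcyc le_rfl)
  simpa using h

/-- `Subgroup.zpowers x` is a cyclic group. -/
lemma aux_zpowers_isCyclic {G : Type*} [Group G] (x : G) : IsCyclic (Subgroup.zpowers x) := by
  refine ⟨⟨⟨x, Subgroup.mem_zpowers x⟩, fun y => ?_⟩⟩
  obtain ⟨n, hn⟩ := y.2
  exact ⟨n, Subtype.ext (by simpa using hn)⟩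

open SimpleGraph in
/-- From a cycle at `a`, extract the first two neighbors `b`, `d` and the last
neighbor `c`, with the distinctness facts coming from the cycle structure. -/
lemma aux_extract {V : Type*} {G' : SimpleGraph V} {a : V} {w : G'.Walk a a} (hw : w.IsCycle) :
    ∃ b c d : V, G'.Adj a b ∧ G'.Adj b d ∧ G'.Adj c a ∧ b ≠ c ∧ d ≠ a := by
  have h3 := hw.three_le_length
  cases w with
  | nil => simp at h3
  | @cons _ b _ h₁ w₁ =>
    cases w₁ with
    | nil => simp at h3
    | @cons _ d _ h₂ w₂ =>
      obtain ⟨c, q, hc, heq⟩ := Walk.exists_cons_eq_concat h₁ (Walk.cons h₂ w₂)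
      refine ⟨b, c, d, h₁, h₂, hc, ?_, ?_⟩
      · -- b ≠ c via edges nodup
        intro hbc
        subst hbc
        have hnd := hw.edges_nodup
        have E := congrArg Walk.edges heq
        simp only [Walk.edges_cons, Walk.edges_concat] at E hnd
        rw [List.concat_eq_append] at E
        rcases q with _ | ⟨hq, q'⟩
        · exact hc.ne rfl
        · simp only [Walk.edges_cons, List.cons_append] at E
          have E2 := (List.cons_eq_cons.mp E).2
          have hmem : s(a, b) ∈ s(b, d) :: w₂.edges := by
            rw [E2]
            simp [Sym2.eq_swap]
          rw [List.nodup_cons] at hnd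
          exact hnd.1 hmem
      · intro hda
        subst hda
        have hnd := hw.edges_nodup
        simp [Sym2.eq_swap, List.nodup_cons] at hnd


theorem stmt12 (G : Type*) [Group G] [Finite G] :
    (cyclicIntersectionGraph G).egirth = 3 ∨ (cyclicIntersectionGraph G).egirth = ⊤ := by
  by_cases htop : (cyclicIntersectionGraph G).egirth = ⊤
  · exact Or.inr htop
  left
  refine le_antisymm ?_ SimpleGraph.three_le_egirth
  have hac : ¬ (cyclicIntersectionGraph G).IsAcyclic := fun h => htop h.egirth_eq_top
  rw [SimpleGraph.IsAcyclic] at hac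
  push_neg at hac
  obtain ⟨A, w, hw⟩ := hac
  obtain ⟨B, C, D, hAB, hBD, hCA, hBC, hDA⟩ := aux_extract hw
  -- pick a nontrivial element of A ⊓ B
  obtain ⟨⟨x, hx⟩, hx1⟩ := Subgroup.ne_bot_iff_exists_ne_one.mp hAB.2
  have hx1' : x ≠ 1 := fun h => hx1 (Subtype.ext h)
  have hxA : x ∈ A.1 := hx.1
  have hxB : x ∈ B.1 := hx.2
  set Z : Subgroup G := Subgroup.zpowers x with hZ
  have hZbot : Z ≠ ⊥ := fun h => hx1' (Subgroup.zpowers_eq_bot.mp h)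
  have hZA : Z ≤ A.1 := Subgroup.zpowers_le.mpr hxA
  have hZB : Z ≤ B.1 := Subgroup.zpowers_le.mpr hxB
  have hZtop : Z ≠ ⊤ := fun h => A.2.2.1 (top_le_iff.mp ((le_of_eq h.symm).trans hZA))
  set Cv : CyclicVertex G := ⟨Z, hZbot, hZtop, aux_zpowers_isCyclic x⟩ with hCv
  by_cases hCvA : Cv = A
  · -- A.1 = Z ≤ B.1 : use triangle A B C
    have hAleB : A.1 ≤ B.1 := by rw [← congrArg Subtype.val hCvA]; exact hZB
    refine aux_triangle_egirth_le _ hAB ⟨hBC, ?_⟩ hCA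
    intro h
    exact hCA.2 (le_bot_iff.mp ((le_inf (inf_le_right.trans hAleB) inf_le_left).trans h.le))
  by_cases hCvB : Cv = B
  · -- B.1 = Z ≤ A.1 : use triangle A B D
    have hBleA : B.1 ≤ A.1 := by rw [← congrArg Subtype.val hCvB]; exact hZA
    refine aux_triangle_egirth_le _ hAB hBD ⟨hDA, ?_⟩
    intro h
    exact hBD.2 (le_bot_iff.mp ((le_inf inf_le_right (inf_le_left.trans hBleA)).trans h.le))
  · -- Cv distinct from A and B : triangle A B Cv
    refine aux_triangle_egirth_le _ hAB ⟨Ne.symm hCvB, ?_⟩ ⟨hCvA, ?_⟩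
    · exact fun h => hZbot (le_bot_iff.mp ((le_inf hZB le_rfl).trans h.le))
    · exact fun h => hZbot (le_bot_iff.mp ((le_inf le_rfl hZA).trans h.le))
end

section
/- Let n = p_1^{α_1}···p_k^{α_k} with k ≥ 2 distinct primes. The domination number of the intersection graph of cyclic subgroups of Z_n is 1 if some α_i > 1, and is 2 if all α_i = 1. In particular, if some α_i > 1 then the subgroup of Z_n of order p_1 p_2 ··· p_k intersects every other proper nontrivial subgroup nontrivially. -/
/-- The domination number: minimum size of a set of vertices such that every vertex
outside the set is adjacent to a member of the set. -/
noncomputable def dominationNumber {V : Type*} (G : SimpleGraph V) : ℕ :=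
  sInf {m : ℕ | ∃ D : Finset V, D.card = m ∧ ∀ v ∉ D, ∃ u ∈ D, G.Adj u v}

section helpers
open AddSubgroup

variable {n : ℕ} [NeZero n]

/-- The subgroup of `ZMod n` of order `d` (for `d ∣ n`). -/
def Tsub (n d : ℕ) : AddSubgroup (ZMod n) :=
  AddSubgroup.zmultiples ((n / d : ℕ) : ZMod n)

lemma card_Tsub {d : ℕ} (hd : d ∣ n) : Nat.card (Tsub n d) = d := by
  have hn : n ≠ 0 := NeZero.ne n
  rw [Tsub, Nat.card_zmultiples, ZMod.addOrderOf_coe _ hn,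
    Nat.gcd_eq_right (Nat.div_dvd_of_dvd hd), Nat.div_div_self hd hn]

lemma mem_Tsub {d : ℕ} (hd : d ∣ n) {x : ZMod n} : x ∈ Tsub n d ↔ d • x = 0 := by
  have hn : n ≠ 0 := NeZero.ne n
  have hd0 : d ≠ 0 := by rintro rfl; exact hn (Nat.zero_dvd.mp hd)
  constructor
  · rintro ⟨k, rfl⟩
    show d • (k • ((n / d : ℕ) : ZMod n)) = 0
    have hc : d • ((n / d : ℕ) : ZMod n) = 0 := by
      rw [nsmul_eq_mul, ← Nat.cast_mul, Nat.mul_div_cancel' hd, ZMod.natCast_self]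
    rw [zsmul_eq_mul, nsmul_eq_mul, mul_left_comm, ← nsmul_eq_mul, hc, mul_zero]
  · intro hx
    have hvx : ((x.val : ℕ) : ZMod n) = x := ZMod.natCast_zmod_val x
    have hnd : n ∣ d * x.val := by
      rw [← ZMod.natCast_eq_zero_iff, Nat.cast_mul, hvx, ← nsmul_eq_mul, hx]
    have hmd : n / d ∣ x.val := by
      obtain ⟨t, ht⟩ := hnd
      refine ⟨t, ?_⟩
      have h1 : d * x.val = d * (n / d * t) := by
        rw [ht, ← mul_assoc, Nat.mul_div_cancel' hd]
      exact Nat.eq_of_mul_eq_mul_left (Nat.pos_of_ne_zero hd0) h1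
    obtain ⟨t, ht⟩ := hmd
    refine ⟨(t : ℤ), ?_⟩
    show (t : ℤ) • ((n / d : ℕ) : ZMod n) = x
    rw [zsmul_eq_mul, Int.cast_natCast, ← Nat.cast_mul, mul_comm, ← ht, hvx]

lemma eq_Tsub (H : AddSubgroup (ZMod n)) : H = Tsub n (Nat.card H) := by
  have hdvd : Nat.card H ∣ n := by
    simpa [Nat.card_zmod] using AddSubgroup.card_addSubgroup_dvd_card H
  have hle : H ≤ Tsub n (Nat.card H) := by
    intro x hx
    rw [mem_Tsub hdvd]
    have h := card_nsmul_eq_zero' (x := (⟨x, hx⟩ : H))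
    have h2 : ((Nat.card H • (⟨x, hx⟩ : H) : H) : ZMod n) = 0 := by rw [h]; rfl
    exact h2
  exact AddSubgroup.eq_of_le_of_card_ge hle (le_of_eq (card_Tsub hdvd))

lemma inf_Tsub {a b : ℕ} (ha : a ∣ n) (hb : b ∣ n) :
    Tsub n a ⊓ Tsub n b = Tsub n (Nat.gcd a b) := by
  ext x
  rw [AddSubgroup.mem_inf, mem_Tsub ha, mem_Tsub hb,
    mem_Tsub ((Nat.gcd_dvd_left a b).trans ha),
    ← addOrderOf_dvd_iff_nsmul_eq_zero, ← addOrderOf_dvd_iff_nsmul_eq_zero,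
    ← addOrderOf_dvd_iff_nsmul_eq_zero]
  exact ⟨fun ⟨h1, h2⟩ => Nat.dvd_gcd h1 h2,
    fun h => ⟨h.trans (Nat.gcd_dvd_left a b), h.trans (Nat.gcd_dvd_right a b)⟩⟩

lemma Tsub_one_eq_bot : Tsub n 1 = ⊥ :=
  AddSubgroup.card_eq_one.mp (card_Tsub (one_dvd n))

lemma Tsub_ne_bot {d : ℕ} (hd : d ∣ n) (h1 : d ≠ 1) : Tsub n d ≠ ⊥ := by
  intro h
  have := card_Tsub (n := n) hd
  rw [h] at this
  simp at this
  exact h1 this.symm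

lemma Tsub_ne_top {d : ℕ} (hd : d ∣ n) (h1 : d ≠ n) : Tsub n d ≠ ⊤ := by
  intro h
  have := card_Tsub (n := n) hd
  rw [h, AddSubgroup.card_top, Nat.card_zmod] at this
  exact h1 this.symm

lemma inf_ne_bot (H K : AddSubgroup (ZMod n))
    (h : Nat.gcd (Nat.card H) (Nat.card K) ≠ 1) : H ⊓ K ≠ ⊥ := by
  have hH : Nat.card H ∣ n := by
    simpa [Nat.card_zmod] using AddSubgroup.card_addSubgroup_dvd_card H
  have hK : Nat.card K ∣ n := by
    simpa [Nat.card_zmod] using AddSubgroup.card_addSubgroup_dvd_card K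
  rw [eq_Tsub H, eq_Tsub K, inf_Tsub hH hK]
  exact Tsub_ne_bot ((Nat.gcd_dvd_left _ _).trans hH) h

lemma inf_eq_bot (H K : AddSubgroup (ZMod n))
    (h : Nat.gcd (Nat.card H) (Nat.card K) = 1) : H ⊓ K = ⊥ := by
  have hH : Nat.card H ∣ n := by
    simpa [Nat.card_zmod] using AddSubgroup.card_addSubgroup_dvd_card H
  have hK : Nat.card K ∣ n := by
    simpa [Nat.card_zmod] using AddSubgroup.card_addSubgroup_dvd_card K
  rw [eq_Tsub H, eq_Tsub K, inf_Tsub hH hK, h, Tsub_one_eq_bot]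


lemma card_vert_ne_one {H : AddSubgroup (ZMod n)} (h : H ≠ ⊥) : Nat.card H ≠ 1 :=
  fun e => h (AddSubgroup.card_eq_one.mp e)

lemma card_vert_ne_n {H : AddSubgroup (ZMod n)} (h : H ≠ ⊤) : Nat.card H ≠ n := by
  intro e
  apply h
  rw [eq_Tsub H, e]
  have htop := eq_Tsub (⊤ : AddSubgroup (ZMod n))
  rw [AddSubgroup.card_top, Nat.card_zmod] at htop
  exact htop.symm

lemma card_vert_dvd (H : AddSubgroup (ZMod n)) : Nat.card H ∣ n := by
  simpa [Nat.card_zmod] using AddSubgroup.card_addSubgroup_dvd_card H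

/-- Build a vertex from a divisor. -/
def vert (n : ℕ) [NeZero n] (d : ℕ) (hd : d ∣ n) (h1 : d ≠ 1) (h2 : d ≠ n) :
    AddCyclicVertex (ZMod n) :=
  ⟨Tsub n d, Tsub_ne_bot hd h1, Tsub_ne_top hd h2, inferInstance⟩

end helpers

theorem stmt19 (n : ℕ) (hk : 2 ≤ n.primeFactors.card) :
    (¬ Squarefree n → dominationNumber (addCyclicIntersectionGraph (ZMod n)) = 1) ∧
    (Squarefree n → dominationNumber (addCyclicIntersectionGraph (ZMod n)) = 2) ∧
    (¬ Squarefree n →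
      ∃ H : AddSubgroup (ZMod n), Nat.card H = ∏ p ∈ n.primeFactors, p ∧
        ∀ K : AddSubgroup (ZMod n), K ≠ ⊥ → K ≠ ⊤ → K ≠ H → H ⊓ K ≠ ⊥) := by
  classical
  have hn0 : n ≠ 0 := by
    rintro rfl; simp at hk
  have hn1 : n ≠ 1 := by
    rintro rfl; simp at hk
  haveI : NeZero n := ⟨hn0⟩
  set r := ∏ p ∈ n.primeFactors, p with hr
  have hr_dvd : r ∣ n := Nat.prod_primeFactors_dvd n
  have hr0 : r ≠ 0 := fun e => hn0 (Nat.eq_zero_of_zero_dvd (e ▸ hr_dvd))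
  obtain ⟨p0, hp0⟩ : ∃ p, p ∈ n.primeFactors := by
    rcases Finset.card_pos.mp (by omega : 0 < n.primeFactors.card) with ⟨p, hp⟩
    exact ⟨p, hp⟩
  have hp0' := Nat.prime_of_mem_primeFactors hp0
  have hr1 : r ≠ 1 := by
    intro e
    have : p0 ∣ r := Finset.dvd_prod_of_mem _ hp0
    rw [e] at this
    exact hp0'.one_lt.ne' (Nat.eq_one_of_dvd_one this)
  -- squarefree of r
  have hr_sq : Squarefree r := by
    rw [Nat.squarefree_iff_factorization_le_one hr0]
    intro q
    rw [hr, Nat.factorization_prod (fun p hp => (Nat.prime_of_mem_primeFactors hp).ne_zero)]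
    rw [Finsupp.finset_sum_apply]
    calc (∑ p ∈ n.primeFactors, (Nat.factorization p) q)
        = ∑ p ∈ n.primeFactors, if q = p then 1 else 0 := by
          refine Finset.sum_congr rfl fun p hp => ?_
          rw [(Nat.prime_of_mem_primeFactors hp).factorization]
          simp [Finsupp.single_apply, eq_comm]
      _ ≤ 1 := by
          rw [Finset.sum_ite_eq]
          split <;> simp
  -- key: gcd of r with any card of nontrivial subgroup is > 1
  have key : ∀ K : AddSubgroup (ZMod n), K ≠ ⊥ → Tsub n r ⊓ K ≠ ⊥ := by
    intro K hKbot
    have hd1 : Nat.card K ≠ 1 := card_vert_ne_one hKbot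
    have hddvd : Nat.card K ∣ n := card_vert_dvd K
    have hd0 : Nat.card K ≠ 0 := fun e => hn0 (Nat.eq_zero_of_zero_dvd (e ▸ hddvd))
    apply inf_ne_bot
    rw [card_Tsub hr_dvd]
    intro hgcd
    set q := (Nat.card K).minFac with hq
    have hqp : q.Prime := Nat.minFac_prime hd1
    have hqd : q ∣ Nat.card K := Nat.minFac_dvd _
    have hqn : q ∣ n := hqd.trans hddvd
    have hqr : q ∣ r := Finset.dvd_prod_of_mem _ (Nat.mem_primeFactors.mpr ⟨hqp, hqn, hn0⟩)
    have : q ∣ 1 := by rw [← hgcd]; exact Nat.dvd_gcd hqr hqd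
    exact hqp.one_lt.ne' (Nat.eq_one_of_dvd_one this)
  refine ⟨?_, ?_, ?_⟩
  · -- not squarefree → domination number 1
    intro hsq
    have hrn : r ≠ n := fun e => hsq (e ▸ hr_sq)
    set V1 : AddCyclicVertex (ZMod n) := vert n r hr_dvd hr1 hrn with hV1
    have h1mem : 1 ∈ {m : ℕ | ∃ D : Finset (AddCyclicVertex (ZMod n)), D.card = m ∧
        ∀ v ∉ D, ∃ u ∈ D, (addCyclicIntersectionGraph (ZMod n)).Adj u v} := by
      refine ⟨{V1}, Finset.card_singleton _, fun v hv => ⟨V1, Finset.mem_singleton_self _, ?_⟩⟩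
      refine ⟨fun e => hv (e ▸ Finset.mem_singleton_self _), ?_⟩
      exact key v.1 v.2.1
    have h0mem : 0 ∉ {m : ℕ | ∃ D : Finset (AddCyclicVertex (ZMod n)), D.card = m ∧
        ∀ v ∉ D, ∃ u ∈ D, (addCyclicIntersectionGraph (ZMod n)).Adj u v} := by
      rintro ⟨D, hD, hdom⟩
      rw [Finset.card_eq_zero] at hD
      subst hD
      obtain ⟨u, hu, -⟩ := hdom V1 (Finset.notMem_empty _)
      exact Finset.notMem_empty _ hu
    rw [dominationNumber]
    have hmem := Nat.sInf_mem (⟨1, h1mem⟩ : Set.Nonempty _)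
    have hle := Nat.sInf_le h1mem
    have hne : sInf _ ≠ 0 := fun e => h0mem (e ▸ hmem)
    omega
  · -- squarefree → domination number 2
    intro hsq
    set p := n.minFac with hp
    have hpp : p.Prime := Nat.minFac_prime hn1
    have hpn : p ∣ n := Nat.minFac_dvd n
    set m := n / p with hm
    have hpm : p * m = n := Nat.mul_div_cancel' hpn
    have hm_dvd : m ∣ n := Nat.div_dvd_of_dvd hpn
    have hm1 : m ≠ 1 := by
      intro e
      rw [e, mul_one] at hpm
      rw [← hpm] at hk
      rw [hpp.primeFactors] at hk
      simp at hk
    have hm0 : m ≠ 0 := fun e => hn0 (by rw [← hpm, e, mul_zero])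
    have hmn : m ≠ n := by
      intro e
      rw [e] at hpm
      have : p = 1 := by
        have hn' : 0 < n := Nat.pos_of_ne_zero hn0
        exact Nat.eq_of_mul_eq_mul_right hn' (by omega)
      exact hpp.one_lt.ne' this
    have hpn' : p ≠ n := by
      intro e
      apply hm1
      rw [hm, ← e, Nat.div_self hpp.pos]
    have hp_ne_m : p ≠ m := by
      intro e
      have : p * p ∣ n := by rw [← hpm, ← e]
      exact hpp.one_lt.ne' (Nat.isUnit_iff.mp (hsq p this))
    set V1 : AddCyclicVertex (ZMod n) := vert n p hpn hpp.ne_one hpn' with hV1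
    set V2 : AddCyclicVertex (ZMod n) := vert n m hm_dvd hm1 hmn with hV2
    have hV12 : V1 ≠ V2 := by
      intro e
      apply hp_ne_m
      have : (V1.1 : AddSubgroup (ZMod n)) = V2.1 := by rw [e]
      have hc : Nat.card (Tsub n p) = Nat.card (Tsub n m) := by
        rw [hV1, hV2] at this
        exact congrArg (fun S : AddSubgroup (ZMod n) => Nat.card S) this
      rwa [card_Tsub hpn, card_Tsub hm_dvd] at hc
    have h2mem : 2 ∈ {m : ℕ | ∃ D : Finset (AddCyclicVertex (ZMod n)), D.card = m ∧
        ∀ v ∉ D, ∃ u ∈ D, (addCyclicIntersectionGraph (ZMod n)).Adj u v} := by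
      refine ⟨{V1, V2}, ?_, ?_⟩
      · rw [Finset.card_insert_of_notMem (by simp [hV12]), Finset.card_singleton]
      · intro v hv
        simp only [Finset.mem_insert, Finset.mem_singleton, not_or] at hv
        obtain ⟨hv1, hv2⟩ := hv
        set d := Nat.card v.1 with hd
        have hd1 : d ≠ 1 := card_vert_ne_one v.2.1
        have hddvd : d ∣ n := card_vert_dvd v.1
        have hveq : v.1 = Tsub n d := eq_Tsub v.1
        by_cases hpd : p ∣ d
        · refine ⟨V1, by simp, fun e => hv1 e.symm, ?_⟩
          show Tsub n p ⊓ v.1 ≠ ⊥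
          rw [hveq, inf_Tsub hpn hddvd]
          refine Tsub_ne_bot ((Nat.gcd_dvd_left _ _).trans hpn) ?_
          rw [Nat.gcd_eq_left hpd]
          exact hpp.ne_one
        · refine ⟨V2, by simp, fun e => hv2 e.symm, ?_⟩
          show Tsub n m ⊓ v.1 ≠ ⊥
          rw [hveq, inf_Tsub hm_dvd hddvd]
          refine Tsub_ne_bot ((Nat.gcd_dvd_left _ _).trans hm_dvd) ?_
          have hco : Nat.Coprime p d := (Nat.Prime.coprime_iff_not_dvd hpp).mpr hpd
          have hdm : d ∣ m := (Nat.Coprime.dvd_of_dvd_mul_left (hco.symm) (hpm ▸ hddvd))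
          rw [Nat.gcd_eq_right hdm]
          exact hd1
    have h0mem : 0 ∉ {m : ℕ | ∃ D : Finset (AddCyclicVertex (ZMod n)), D.card = m ∧
        ∀ v ∉ D, ∃ u ∈ D, (addCyclicIntersectionGraph (ZMod n)).Adj u v} := by
      rintro ⟨D, hD, hdom⟩
      rw [Finset.card_eq_zero] at hD
      subst hD
      obtain ⟨u, hu, -⟩ := hdom V1 (Finset.notMem_empty _)
      exact Finset.notMem_empty _ hu
    have h1mem : 1 ∉ {m : ℕ | ∃ D : Finset (AddCyclicVertex (ZMod n)), D.card = m ∧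
        ∀ v ∉ D, ∃ u ∈ D, (addCyclicIntersectionGraph (ZMod n)).Adj u v} := by
      rintro ⟨D, hD, hdom⟩
      obtain ⟨w, rfl⟩ := Finset.card_eq_one.mp hD
      set d := Nat.card w.1 with hd
      have hd1 : d ≠ 1 := card_vert_ne_one w.2.1
      have hdn : d ≠ n := card_vert_ne_n w.2.2.1
      have hddvd : d ∣ n := card_vert_dvd w.1
      have hdlt : d < n := lt_of_le_of_ne (Nat.le_of_dvd (Nat.pos_of_ne_zero hn0) hddvd) hdn
      have hq : ∃ q ∈ n.primeFactors, ¬ q ∣ d := by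
        by_contra h
        push_neg at h
        have : r ∣ d := Finset.prod_primes_dvd d
          (fun q hq => (Nat.prime_of_mem_primeFactors hq).prime) h
        rw [hr, Nat.prod_primeFactors_of_squarefree hsq] at this
        have hd0 : d ≠ 0 := fun e => hn0 (Nat.eq_zero_of_zero_dvd (e ▸ hddvd))
        have := Nat.le_of_dvd (Nat.pos_of_ne_zero hd0) this
        omega
      obtain ⟨q, hqpf, hqd⟩ := hq
      have hqp := Nat.prime_of_mem_primeFactors hqpf
      have hqn : q ∣ n := Nat.dvd_of_mem_primeFactors hqpf
      have hq_ne_n : q ≠ n := by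
        intro e
        rw [← e, hqp.primeFactors] at hk
        simp at hk
      set K : AddCyclicVertex (ZMod n) := vert n q hqn hqp.ne_one hq_ne_n with hK
      have hKw : K ∉ ({w} : Finset _) := by
        rw [Finset.mem_singleton]
        intro e
        apply hqd
        have : (K.1 : AddSubgroup (ZMod n)) = w.1 := by rw [e]
        have hc : q = d := by
          rw [hK] at this
          have h2 := congrArg (fun S : AddSubgroup (ZMod n) => Nat.card S) this
          have h3 : Nat.card (Tsub n q) = Nat.card w.1 := h2
          rwa [card_Tsub hqn] at h3
        exact hc ▸ dvd_refl q
      obtain ⟨u, hu, hadj⟩ := hdom K hKw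
      rw [Finset.mem_singleton] at hu
      rw [hu] at hadj
      have hinf : w.1 ⊓ K.1 = ⊥ := by
        have hveq : w.1 = Tsub n d := eq_Tsub w.1
        show w.1 ⊓ Tsub n q = ⊥
        rw [hveq, inf_Tsub hddvd hqn]
        have : Nat.gcd d q = 1 :=
          Nat.coprime_comm.mp ((Nat.Prime.coprime_iff_not_dvd hqp).mpr hqd)
        rw [this, Tsub_one_eq_bot]
      exact hadj.2 hinf
    rw [dominationNumber]
    have hmem := Nat.sInf_mem (⟨2, h2mem⟩ : Set.Nonempty _)
    have hle := Nat.sInf_le h2mem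
    have hne0 : sInf _ ≠ 0 := fun e => h0mem (e ▸ hmem)
    have hne1 : sInf _ ≠ 1 := fun e => h1mem (e ▸ hmem)
    omega
  · -- third part
    intro hsq
    refine ⟨Tsub n r, card_Tsub hr_dvd, fun K hKbot _ _ => key K hKbot⟩
end
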